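/- arXiv:2504.01166 — 4 statements merged into one kernel-verified Lean document; each statement's English description precedes it below -/
import Mathlib

section
/- Let α > 0 and let (x_n)_{n≥0} be the backward orbit of 1 under the branch f̂(x) = x(1+x^α), so f̂(x_{n+1}) = x_n and x₀ = 1. Setting X_n = x_n^{−α}, there exists a constant C' > 0 such that for all sufficiently large n, |X_n − αn| ≤ C' log n. -/
open Real Set Filter Topology

lemma aux_bern_lower {α t : ℝ} (hα : 0 < α) (ht : 0 ≤ t) :
    1 - α * t ≤ (1 + t) ^ (-α) := by
  have h1t : (0:ℝ) < 1 + t := by linarith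
  rcases le_or_gt 1 α with hge | hlt
  · have hs : (-1:ℝ) ≤ -t/(1+t) := by
      rw [neg_div, neg_le_neg_iff, div_le_one h1t]; linarith
    have hb := one_add_mul_self_le_rpow_one_add hs hge
    have heq : (1:ℝ) + (-t/(1+t)) = (1+t)⁻¹ := by field_simp; ring
    rw [heq] at hb
    rw [Real.rpow_neg h1t.le, ← Real.inv_rpow h1t.le]
    refine le_trans ?_ hb
    have h2 : α * t / (1 + t) ≤ α * t := by
      rw [div_le_iff₀ h1t]
      nlinarith [mul_nonneg hα.le ht]
    have h3 : α * (-t/(1+t)) = -(α * t / (1+t)) := by ring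
    linarith [h3 ▸ le_refl (1 + α * (-t/(1+t)))]
  · have hb := rpow_one_add_le_one_add_mul_self (by linarith : (-1:ℝ) ≤ t) hα.le hlt.le
    have hpow : 0 < (1+t) ^ α := Real.rpow_pos_of_pos h1t α
    have h1at : (0:ℝ) < 1 + α * t := by nlinarith
    rw [Real.rpow_neg h1t.le]
    have hinvpos : 0 < ((1+t)^α)⁻¹ := by positivity
    rcases le_or_gt (1 - α*t) 0 with h | h
    · linarith
    · have hmul : (1 - α*t) * (1+t)^α ≤ 1 := by
        nlinarith [mul_le_mul_of_nonneg_left hb h.le, sq_nonneg (α*t)]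
      have h4 := mul_le_mul_of_nonneg_right hmul hinvpos.le
      have hc : (1+t)^α * ((1+t)^α)⁻¹ = 1 := mul_inv_cancel₀ hpow.ne'
      nlinarith [h4, hc]

lemma aux_bern_upper {α t : ℝ} (hα : 0 < α) (ht : 0 ≤ t) :
    (1 + t) ^ (-α) ≤ 1 - α * t + (α * (α + 1)) * t ^ 2 := by
  have h1t : (0:ℝ) < 1 + t := by linarith
  rcases le_or_gt 1 α with hge | hlt
  · have hb := one_add_mul_self_le_rpow_one_add (by linarith : (-1:ℝ) ≤ t) hge
    have h1at : (0:ℝ) < 1 + α * t := by nlinarith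
    have hpow : 0 < (1+t) ^ α := Real.rpow_pos_of_pos h1t α
    rw [Real.rpow_neg h1t.le]
    have h1 : ((1+t)^α)⁻¹ ≤ (1 + α*t)⁻¹ := inv_anti₀ h1at hb
    refine h1.trans ?_
    have key : 1 ≤ (1 - α*t + (α*(α+1))*t^2) * (1 + α*t) := by
      nlinarith [mul_nonneg (mul_nonneg (mul_nonneg hα.le hα.le) hα.le) (mul_nonneg ht (mul_nonneg ht ht)),
        mul_nonneg (mul_nonneg hα.le hα.le) (mul_nonneg ht (mul_nonneg ht ht)),
        mul_nonneg hα.le (mul_nonneg ht ht)]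
    have hinvnn : (0:ℝ) ≤ (1 + α*t)⁻¹ := by positivity
    have h4 := mul_le_mul_of_nonneg_right key hinvnn
    have hc : (1 + α*t) * (1 + α*t)⁻¹ = 1 := mul_inv_cancel₀ h1at.ne'
    nlinarith [h4, hc]
  · have hs : (-1:ℝ) ≤ -t/(1+t) := by
      rw [neg_div, neg_le_neg_iff, div_le_one h1t]; linarith
    have hb := rpow_one_add_le_one_add_mul_self hs hα.le hlt.le
    have heq : (1:ℝ) + (-t/(1+t)) = (1+t)⁻¹ := by field_simp; ring
    rw [heq] at hb
    rw [Real.rpow_neg h1t.le, ← Real.inv_rpow h1t.le]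
    refine hb.trans ?_
    have h2 : α * t - α * t^2 ≤ α * t / (1 + t) := by
      rw [le_div_iff₀ h1t]
      nlinarith [mul_nonneg (mul_nonneg hα.le ht) (mul_nonneg ht ht)]
    have h3 : α * (-t/(1+t)) = -(α * t / (1+t)) := by ring
    nlinarith [mul_nonneg (mul_nonneg hα.le hα.le) (mul_nonneg ht ht)]

theorem stmt3 (α : ℝ) (hα : 0 < α) (x : ℕ → ℝ) (hx0 : x 0 = 1)
    (hx : ∀ n, x (n+1) ∈ Set.Ioo (0:ℝ) (x n) ∧ x (n+1) * (1 + x (n+1) ^ α) = x n) :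
    ∃ C' > (0:ℝ), ∀ᶠ n : ℕ in Filter.atTop,
      |(x n) ^ (-α) - α * n| ≤ C' * Real.log n := by
  have hxpos : ∀ n, 0 < x n := by
    intro n
    cases n with
    | zero => rw [hx0]; norm_num
    | succ k => exact (hx k).1.1
  have hxlt : ∀ n, x (n+1) < x n := fun n => (hx n).1.2
  have hxle1 : ∀ n, x n ≤ 1 := by
    intro n
    induction n with
    | zero => rw [hx0]
    | succ k ih => exact ((hxlt k).trans_le ih).le
  set X : ℕ → ℝ := fun n => (x n) ^ (-α) with hXdef
  set C : ℝ := α * (α + 1) with hCdef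
  set D : ℝ := 2 * (α + 1) with hDdef
  have hCpos : 0 < C := by positivity
  have hDpos : 0 < D := by positivity
  have hXpos : ∀ n, 0 < X n := fun n => Real.rpow_pos_of_pos (hxpos n) _
  have htpos : ∀ n, 0 < (x (n+1)) ^ α := fun n => Real.rpow_pos_of_pos (hxpos (n+1)) _
  have htle1 : ∀ n, (x (n+1)) ^ α ≤ 1 :=
    fun n => Real.rpow_le_one (hxpos (n+1)).le (hxle1 (n+1)) hα.le
  have hXt : ∀ n, X (n+1) * (x (n+1)) ^ α = 1 := by
    intro n
    simp only [hXdef]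
    rw [← Real.rpow_add (hxpos (n+1))]
    simp
  have htinv : ∀ n, (x (n+1)) ^ α = (X (n+1))⁻¹ := by
    intro n
    exact eq_inv_of_mul_eq_one_left (by rw [mul_comm]; exact hXt n)
  have hrec : ∀ n, X n = X (n+1) * (1 + (x (n+1))^α) ^ (-α) := by
    intro n
    simp only [hXdef]
    rw [← (hx n).2]
    exact Real.mul_rpow (hxpos (n+1)).le (by linarith [htpos n])
  -- X (n+1) = X n * (1+t)^α
  have hsucc : ∀ n, X (n+1) = X n * (1 + (x (n+1))^α) ^ α := by
    intro n
    rw [hrec n, mul_assoc, ← Real.rpow_add (by linarith [htpos n] : (0:ℝ) < 1 + (x (n+1))^α)]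
    simp
  -- monotone
  have hmono : ∀ n, X n ≤ X (n+1) := by
    intro n
    rw [hrec n]
    have h1 : (1 + (x (n+1))^α) ^ (-α) ≤ 1 :=
      Real.rpow_le_one_of_one_le_of_nonpos (by linarith [htpos n]) (by linarith)
    nlinarith [hXpos (n+1)]
  have hmonoX : Monotone X := monotone_nat_of_le_succ hmono
  -- upper increment
  have hup : ∀ n, X (n+1) ≤ X n + α := by
    intro n
    have hb := aux_bern_lower hα (htpos n).le
    have h1 := mul_le_mul_of_nonneg_left hb (hXpos (n+1)).le
    rw [← hrec n] at h1
    have h2 := hXt n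
    nlinarith [h1, h2]
  -- lower increment
  have hlow : ∀ n, X n + α - C * (X (n+1))⁻¹ ≤ X (n+1) := by
    intro n
    have hb := aux_bern_upper hα (htpos n).le
    have h1 := mul_le_mul_of_nonneg_left hb (hXpos (n+1)).le
    rw [← hrec n] at h1
    have h2 := hXt n
    have h3 : X (n+1) * ((x (n+1))^α)^2 = (X (n+1))⁻¹ := by
      rw [sq, ← mul_assoc, h2, one_mul, htinv n]
    have h4 : X (n+1) * (1 - α * (x (n+1))^α + α*(α+1) * ((x (n+1))^α)^2)
        = X (n+1) - α + (α*(α+1)) * (X (n+1))⁻¹ := by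
      calc X (n+1) * (1 - α * (x (n+1))^α + α*(α+1) * ((x (n+1))^α)^2)
          = X (n+1) - α * (X (n+1) * (x (n+1))^α)
            + α*(α+1) * (X (n+1) * ((x (n+1))^α)^2) := by ring
      _ = X (n+1) - α + (α*(α+1)) * (X (n+1))⁻¹ := by rw [h2, h3, mul_one]
    rw [hCdef]
    linarith [h1, h4]
  have hX0 : X 0 = 1 := by simp only [hXdef]; rw [hx0]; simp
  have hXge1 : ∀ n, 1 ≤ X n := fun n => hX0 ▸ hmonoX (Nat.zero_le n)
  -- unboundedness
  have hunb : ∀ M : ℝ, ∃ N, M < X N := by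
    intro M
    by_contra hcon
    push_neg at hcon
    have hM1 : (1:ℝ) ≤ M := le_trans (hXge1 0) (hcon 0)
    have hMpos : (0:ℝ) < M := by linarith
    set q : ℝ := (1 + M⁻¹) ^ α with hq
    have hq1 : 1 < q := by
      rw [hq]
      rw [Real.one_lt_rpow_iff_of_pos (by positivity)]
      left
      constructor
      · have : 0 < M⁻¹ := by positivity
        linarith
      · exact hα
    have hgrow : ∀ n, q ^ n ≤ X n := by
      intro n
      induction n with
      | zero => simpa [hX0] using le_refl (1:ℝ)
      | succ k ih =>
        rw [hsucc k]
        have ht' : M⁻¹ ≤ (x (k+1))^α := by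
          rw [htinv k]
          exact inv_anti₀ (hXpos (k+1)) (hcon (k+1))
        have hbase : (1 + M⁻¹ : ℝ) ≤ 1 + (x (k+1))^α := by linarith
        have hrp : q ≤ (1 + (x (k+1))^α) ^ α :=
          Real.rpow_le_rpow (by positivity) hbase hα.le
        calc q ^ (k+1) = q ^ k * q := by ring
        _ ≤ X k * (1 + (x (k+1))^α) ^ α := by
            apply mul_le_mul ih hrp (by positivity) (hXpos k).le
    obtain ⟨n, hn⟩ := pow_unbounded_of_one_lt M hq1
    exact absurd ((hgrow n).trans (hcon n)) (not_le.mpr hn)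
  obtain ⟨N, hN⟩ := hunb D
  -- growth: X (N+k) ≥ X N + (α/2) k
  have hgrowth : ∀ k : ℕ, X N + (α/2) * k ≤ X (N+k) := by
    intro k
    induction k with
    | zero => simp
    | succ k ih =>
      have h1 := hlow (N+k)
      have h2 : D ≤ X (N+k+1) := le_trans hN.le (hmonoX (by omega))
      have h3 : C * (X (N+k+1))⁻¹ ≤ α/2 := by
        rw [mul_inv_le_iff₀ (hXpos (N+k+1))]
        calc C = (α/2) * D := by rw [hCdef, hDdef]; ring
        _ ≤ (α/2) * X (N+k+1) := by
            apply mul_le_mul_of_nonneg_left h2 (by positivity)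
      push_cast
      have : (N + (k+1)) = (N + k) + 1 := by omega
      rw [this]
      push_cast at ih
      linarith
  -- main lower bound
  have hmain : ∀ k : ℕ, X N + α * k - D * (1 + Real.log ((k:ℝ)+1)) ≤ X (N+k) := by
    intro k
    induction k with
    | zero => simp [Real.log_one]; nlinarith [hDpos]
    | succ k ih =>
      have h1 := hlow (N+k)
      have hk2 : (0:ℝ) < (k:ℝ) + 2 := by positivity
      have hk1 : (0:ℝ) < (k:ℝ) + 1 := by positivity
      -- X(N+k+1) ≥ (α/2)(k+2)
      have h2 : (α/2) * ((k:ℝ)+2) ≤ X (N+(k+1)) := by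
        have := hgrowth (k+1)
        push_cast at this
        have hXN : α/2 ≤ X N := by
          rw [hDdef] at hN; linarith
        linarith
      have h2' : X (N+(k+1)) = X (N+k+1) := by norm_num [Nat.add_assoc]
      -- C / X ≤ D/(k+2)
      have h3 : C * (X (N+k+1))⁻¹ ≤ D / ((k:ℝ)+2) := by
        have hXb : (α/2) * ((k:ℝ)+2) ≤ X (N+k+1) := h2' ▸ h2
        have hbpos : (0:ℝ) < (α/2) * ((k:ℝ)+2) := by positivity
        have hinv := inv_anti₀ hbpos hXb
        have heq : C * ((α/2)*((k:ℝ)+2))⁻¹ = D / ((k:ℝ)+2) := by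
          rw [hCdef, hDdef]; field_simp
        calc C * (X (N+k+1))⁻¹ ≤ C * ((α/2)*((k:ℝ)+2))⁻¹ :=
              mul_le_mul_of_nonneg_left hinv hCpos.le
        _ = D / ((k:ℝ)+2) := heq
      -- log difference
      have h4 : 1 / ((k:ℝ)+2) ≤ Real.log ((k:ℝ)+2) - Real.log ((k:ℝ)+1) := by
        have hd := Real.log_le_sub_one_of_pos (show (0:ℝ) < ((k:ℝ)+1)/((k:ℝ)+2) by positivity)
        rw [Real.log_div hk1.ne' hk2.ne'] at hd
        have hval : ((k:ℝ)+1)/((k:ℝ)+2) - 1 = -(1/((k:ℝ)+2)) := by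
          field_simp
          norm_num
        linarith [hd, hval]
      have h5 : D / ((k:ℝ)+2) ≤ D * (Real.log ((k:ℝ)+2) - Real.log ((k:ℝ)+1)) := by
        rw [div_le_iff₀ hk2]
        have := mul_le_mul_of_nonneg_left h4 hDpos.le
        calc D = D * (1/((k:ℝ)+2)) * ((k:ℝ)+2) := by field_simp
        _ ≤ D * (Real.log ((k:ℝ)+2) - Real.log ((k:ℝ)+1)) * ((k:ℝ)+2) := by
            apply mul_le_mul_of_nonneg_right _ hk2.le
            exact mul_le_mul_of_nonneg_left h4 hDpos.le
      have hcast : ((k:ℝ)+1)+1 = (k:ℝ)+2 := by ring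
      push_cast
      rw [hcast]
      have hidx : N + (k+1) = (N+k)+1 := by omega
      rw [hidx]
      linarith
  -- total upper bound
  have hupper : ∀ n : ℕ, X n ≤ 1 + α * n := by
    intro n
    induction n with
    | zero => simp [hX0]
    | succ k ih =>
      have := hup k
      push_cast
      linarith
  -- conclusion
  refine ⟨α * N + 3 * D + 1, by positivity, ?_⟩
  filter_upwards [Filter.eventually_ge_atTop (max N 3)] with n hn
  have hnN : N ≤ n := le_trans (le_max_left _ _) hn
  have hn3 : 3 ≤ n := le_trans (le_max_right _ _) hn
  have hn1 : (1:ℝ) ≤ (n:ℝ) := by exact_mod_cast le_trans (by norm_num) hn3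
  have hnpos : (0:ℝ) < n := by linarith
  have hlogn : 1 ≤ Real.log n := by
    rw [Real.le_log_iff_exp_le hnpos]
    have h3n : (3:ℝ) ≤ n := by exact_mod_cast hn3
    linarith [Real.exp_one_lt_d9]
  set k : ℕ := n - N with hkdef
  have hNk : N + k = n := by omega
  have hcast : (N:ℝ) + (k:ℝ) = (n:ℝ) := by exact_mod_cast congrArg (Nat.cast : ℕ → ℝ) hNk
  have hlower := hmain k
  rw [hNk] at hlower
  -- bound log(k+1) ≤ 2 log n
  have hlogk : Real.log ((k:ℝ)+1) ≤ 2 * Real.log n := by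
    have h1 : (k:ℝ)+1 ≤ 2*(n:ℝ) := by
      have : (k:ℝ) ≤ (n:ℝ) := by linarith [hcast, (by exact_mod_cast Nat.cast_nonneg N : (0:ℝ) ≤ (N:ℝ))]
      linarith
    have h2 : Real.log ((k:ℝ)+1) ≤ Real.log (2*n) :=
      Real.log_le_log (by positivity) h1
    rw [Real.log_mul (by norm_num) (by positivity : (n:ℝ) ≠ 0)] at h2
    have h3 : Real.log 2 ≤ 1 := by linarith [Real.log_two_lt_d9]
    linarith
  have hupb := hupper n
  have hXN1 : 1 ≤ X N := hXge1 N
  have habs1 : X n - α * n ≤ (α * N + 3 * D + 1) * Real.log n := by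
    have h1 : X n - α * n ≤ 1 := by linarith
    have hαN : (0:ℝ) ≤ α * (N:ℝ) := by positivity
    have hA : (1:ℝ) ≤ α * N + 3 * D + 1 := by linarith
    have h2 : (1:ℝ) ≤ (α * N + 3 * D + 1) * Real.log n := by
      nlinarith [hA, hlogn]
    linarith
  have habs2 : -((α * N + 3 * D + 1) * Real.log n) ≤ X n - α * n := by
    have hsplit : α * (n:ℝ) = α * (N:ℝ) + α * (k:ℝ) := by rw [← hcast]; ring
    have h1 : α * n - X n ≤ α * N + D + D * Real.log ((k:ℝ)+1) := by
      linarith [hlower, hXN1, hsplit]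
    have h2 : α * n - X n ≤ α * N + D + 2 * D * Real.log n := by
      have := mul_le_mul_of_nonneg_left hlogk hDpos.le
      linarith
    have h3 : α * N + D + 2*D*Real.log n ≤ (α * N + 3*D + 1) * Real.log n := by
      have hαN : (0:ℝ) ≤ α * (N:ℝ) := by positivity
      have e1 : 0 ≤ α*(N:ℝ) * (Real.log n - 1) := mul_nonneg hαN (by linarith)
      have e2 : 0 ≤ D * (Real.log n - 1) := mul_nonneg hDpos.le (by linarith)
      nlinarith [e1, e2, hlogn]
    linarith
  have : |X n - α * (n:ℝ)| ≤ (α * N + 3 * D + 1) * Real.log n :=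
    abs_le.mpr ⟨habs2, habs1⟩
  simpa only [hXdef] using this
end

section
/- Let α > 0, f the Manneville–Pomeau map of parameter α, and (x_n)_{n≥0} the backward orbit of 1 under the indifferent branch, with J_n = (x_{n+1}, x_n]. There exists ε₀ ∈ (0,1) such that for all n ≥ 1 and all x ∈ J_n, (1 + ε₀ n)^{1/α + 1} ≤ Df^n(x) ≤ (1 + ε₀^{−1} n)^{1/α + 1}. -/
open Real Set Filter Topology

lemma mpAux_exp_le {x X : ℝ} (h0 : 0 ≤ x) (h1 : x ≤ X) : Real.exp x ≤ 1 + x * Real.exp X := by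
  have h := Real.add_one_le_exp (-x)
  have hex : 0 < Real.exp x := Real.exp_pos x
  have : Real.exp x * (-x + 1) ≤ Real.exp x * Real.exp (-x) :=
    mul_le_mul_of_nonneg_left h hex.le
  rw [← Real.exp_add] at this
  simp at this
  have h2 : Real.exp x ≤ 1 + x * Real.exp x := by nlinarith
  have h3 : Real.exp x ≤ Real.exp X := Real.exp_le_exp.2 h1
  nlinarith

lemma mpAux_rpow_le {α s : ℝ} (hα : 0 < α) (h0 : 0 ≤ s) (h1 : s ≤ 1) :
    (1 + s) ^ α ≤ 1 + (α * Real.exp α) * s := by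
  have hs : (0:ℝ) < 1 + s := by linarith
  rw [Real.rpow_def_of_pos hs]
  have hlog : Real.log (1 + s) ≤ s := by
    have := Real.log_le_sub_one_of_pos hs
    linarith
  have hlog0 : 0 ≤ Real.log (1 + s) := Real.log_nonneg (by linarith)
  have h2 : Real.exp (Real.log (1+s) * α) ≤ Real.exp (s * α) :=
    Real.exp_le_exp.2 (by nlinarith)
  have h3 : Real.exp (s * α) ≤ 1 + (s * α) * Real.exp α :=
    mpAux_exp_le (by positivity) (by nlinarith)
  calc Real.exp (Real.log (1+s) * α) ≤ 1 + (s * α) * Real.exp α := le_trans h2 h3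
    _ = 1 + (α * Real.exp α) * s := by ring

lemma mpAux_log_ge {s : ℝ} (h0 : 0 ≤ s) (h1 : s ≤ 1) : Real.log 2 * s ≤ Real.log (1 + s) := by
  have hc := strictConcaveOn_log_Ioi.concaveOn
  have := hc.2 (show (1:ℝ) ∈ Ioi 0 by norm_num) (show (2:ℝ) ∈ Ioi 0 by norm_num)
    (show (0:ℝ) ≤ 1 - s by linarith) h0 (show (1-s) + s = 1 by ring)
  simp only [smul_eq_mul, Real.log_one, mul_one, mul_zero] at this
  have he : 1 - s + s * 2 = 1 + s := by ring
  rw [he] at this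
  linarith

lemma mpAux_one_add_le_rpow {α s : ℝ} (hα : 0 < α) (h0 : 0 ≤ s) (h1 : s ≤ 1) :
    1 + (α * Real.log 2) * s ≤ (1 + s) ^ α := by
  have hs : (0:ℝ) < 1 + s := by linarith
  rw [Real.rpow_def_of_pos hs]
  have h2 := Real.add_one_le_exp (Real.log (1+s) * α)
  have h3 := mpAux_log_ge h0 h1
  nlinarith [Real.log_pos (by norm_num : (1:ℝ) < 2)]

lemma mpAux_log_ge' {u : ℝ} (h0 : 0 ≤ u) : u - u ^ 2 ≤ Real.log (1 + u) := by
  have hu : (0:ℝ) < 1 + u := by linarith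
  have key : (1:ℝ) / (1 + u) ≤ Real.exp (-(u/(1+u))) := by
    have h := Real.add_one_le_exp (-(u/(1+u)))
    have h' : 1 - u/(1+u) ≤ Real.exp (-(u/(1+u))) := by linarith
    have he : 1 - u/(1+u) = 1/(1+u) := by field_simp; ring
    linarith [he ▸ h']
  have hlog : -(Real.log (1+u)) ≤ -(u/(1+u)) := by
    have := Real.log_le_log (by positivity) key
    rw [Real.log_div one_ne_zero (ne_of_gt hu), Real.log_one, Real.log_exp] at this
    linarith
  have h2 : u - u^2 ≤ u/(1+u) := by
    rw [le_div_iff₀ hu]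
    nlinarith
  linarith

/-- The Manneville–Pomeau map of parameter `α`. -/
noncomputable def MP (α : ℝ) : ℝ → ℝ := fun x =>
  if x * (1 + x ^ α) ≤ 1 then x * (1 + x ^ α) else x * (1 + x ^ α) - 1

/-- Derivative of the `n`-th iterate of the Manneville–Pomeau map along the orbit
(product of the branch derivatives `1 + (α+1) x^α`). -/
noncomputable def Dfn (α : ℝ) (n : ℕ) (x : ℝ) : ℝ :=
  ∏ j ∈ Finset.range n, (1 + (α + 1) * ((MP α)^[j] x) ^ α)

set_option maxHeartbeats 2000000 in
theorem stmt4 (α : ℝ) (hα : 0 < α) (x : ℕ → ℝ) (hx0 : x 0 = 1)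
    (hx : ∀ n, x (n+1) ∈ Set.Ioo (0:ℝ) (x n) ∧ x (n+1) * (1 + x (n+1) ^ α) = x n) :
    ∃ ε₀ ∈ Set.Ioo (0:ℝ) 1, ∀ n : ℕ, 1 ≤ n → ∀ y ∈ Set.Ioc (x (n+1)) (x n),
      (1 + ε₀ * n) ^ (1/α + 1) ≤ Dfn α n y ∧
      Dfn α n y ≤ (1 + ε₀⁻¹ * n) ^ (1/α + 1) := by
  have hxpos : ∀ n, 0 < x n := by
    intro n; cases n with
    | zero => rw [hx0]; norm_num
    | succ n => exact (hx n).1.1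
  have hxlt : ∀ n, x (n+1) < x n := fun n => (hx n).1.2
  have hxle1 : ∀ n, x n ≤ 1 := by
    intro n; induction n with
    | zero => rw [hx0]
    | succ n ih => exact le_of_lt (lt_of_lt_of_le (hxlt n) ih)
  set t : ℕ → ℝ := fun n => x n ^ α with ht
  have ht' : ∀ n, t n = x n ^ α := fun n => rfl
  clear_value t
  have htpos : ∀ n, 0 < t n := fun n => (ht' n) ▸ Real.rpow_pos_of_pos (hxpos n) α
  have htle1 : ∀ n, t n ≤ 1 := fun n => (ht' n) ▸ Real.rpow_le_one (hxpos n).le (hxle1 n) hα.le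
  have hkey : ∀ n, x (n+1) * (1 + t (n+1)) = x n := by
    intro n; rw [ht']; exact (hx n).2
  have htkey : ∀ n, t (n+1) * (1 + t (n+1)) ^ α = t n := by
    intro n
    have hnn : (0:ℝ) ≤ 1 + t (n+1) := by linarith [htpos (n+1)]
    have h2 : (x (n+1) * (1 + t (n+1))) ^ α = t (n+1) * (1 + t (n+1)) ^ α := by
      rw [Real.mul_rpow (hxpos (n+1)).le hnn, ht']
    rw [← h2, hkey n, ht']
  set v : ℕ → ℝ := fun n => (t n)⁻¹ with hv
  have hv' : ∀ n, v n = (t n)⁻¹ := fun n => rfl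
  clear_value v
  have hvpos : ∀ n, 0 < v n := fun n => (hv' n) ▸ inv_pos.2 (htpos n)
  have hvge1 : ∀ n, 1 ≤ v n := fun n => (hv' n) ▸ (one_le_inv₀ (htpos n)).2 (htle1 n)
  have hv0 : v 0 = 1 := by rw [hv' 0, ht' 0, hx0, Real.one_rpow]; norm_num
  have hvkey : ∀ n, v (n+1) = v n * (1 + t (n+1)) ^ α := by
    intro n
    have h := htkey n
    have h1 : t n ≠ 0 := (htpos n).ne'
    have h2 : t (n+1) ≠ 0 := (htpos (n+1)).ne'
    have h3 : (1 + t (n+1)) ^ α ≠ 0 :=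
      ne_of_gt (Real.rpow_pos_of_pos (by linarith [htpos (n+1)]) α)
    rw [hv' (n+1), hv' n]
    field_simp
    rw [← h]
  have hrpow_ge1 : ∀ n, 1 ≤ (1 + t (n+1)) ^ α := by
    intro n
    calc (1:ℝ) = 1 ^ α := (Real.one_rpow α).symm
    _ ≤ (1 + t (n+1)) ^ α := Real.rpow_le_rpow (by norm_num) (by linarith [htpos (n+1)]) hα.le
  have hvmono : ∀ n, v n ≤ v (n+1) := by
    intro n
    rw [hvkey n]
    nlinarith [hvpos n, hrpow_ge1 n]
  have hvt_eq : ∀ n, v (n+1) * t (n+1) = 1 := by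
    intro n
    rw [hv' (n+1)]
    exact inv_mul_cancel₀ (htpos (n+1)).ne'
  have hvt1 : ∀ n, v n * t (n+1) ≤ 1 := by
    intro n
    have h := mul_le_mul_of_nonneg_right (hvmono n) (htpos (n+1)).le
    rw [hvt_eq n] at h
    exact h
  set c : ℝ := α * Real.exp α with hc
  clear_value c
  have hcpos : 0 < c := by rw [hc]; positivity
  have hvub : ∀ n : ℕ, v n ≤ 1 + c * n := by
    intro n; induction n with
    | zero => simp [hv0]
    | succ n ih =>
      have h1 : (1 + t (n+1)) ^ α ≤ 1 + c * t (n+1) := by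
        rw [hc]; exact mpAux_rpow_le hα (htpos (n+1)).le (htle1 (n+1))
      have h2 : v (n+1) ≤ v n * (1 + c * t (n+1)) := by
        rw [hvkey n]
        exact mul_le_mul_of_nonneg_left h1 (hvpos n).le
      have h4 : c * (v n * t (n+1)) ≤ c := by nlinarith [hvt1 n]
      push_cast
      nlinarith
  have h2alpha : (0:ℝ) < (2:ℝ) ^ α := by positivity
  have hvratio : ∀ n, ((2:ℝ) ^ α)⁻¹ ≤ v n * t (n+1) := by
    intro n
    have h1 : (1 + t (n+1)) ^ α ≤ (2:ℝ) ^ α :=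
      Real.rpow_le_rpow (by linarith [htpos (n+1)]) (by linarith [htle1 (n+1)]) hα.le
    have h2 : v (n+1) ≤ v n * (2:ℝ) ^ α := by
      rw [hvkey n]
      exact mul_le_mul_of_nonneg_left h1 (hvpos n).le
    have h4 : 1 ≤ v n * t (n+1) * (2:ℝ)^α := by
      nlinarith [htpos (n+1), hvt_eq n]
    rw [inv_le_iff_one_le_mul₀ h2alpha]
    nlinarith
  set a : ℝ := α * Real.log 2 / (2:ℝ) ^ α with ha
  clear_value a
  have hlog2 : 0 < Real.log 2 := Real.log_pos (by norm_num)
  have hapos : 0 < a := by rw [ha]; positivity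
  have hvlb : ∀ n : ℕ, 1 + a * n ≤ v n := by
    intro n; induction n with
    | zero => simp [hv0]
    | succ n ih =>
      have h1 : 1 + (α * Real.log 2) * t (n+1) ≤ (1 + t (n+1)) ^ α :=
        mpAux_one_add_le_rpow hα (htpos (n+1)).le (htle1 (n+1))
      have h2 : v n * (1 + (α * Real.log 2) * t (n+1)) ≤ v (n+1) := by
        rw [hvkey n]
        exact mul_le_mul_of_nonneg_left h1 (hvpos n).le
      have h4 : a ≤ (α * Real.log 2) * (v n * t (n+1)) := by
        rw [ha, div_eq_mul_inv]
        exact mul_le_mul_of_nonneg_left (hvratio n) (by positivity)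
      push_cast
      nlinarith
  have hprod : ∀ n, ∏ k ∈ Finset.range n, (1 + t (k+1)) = (x n)⁻¹ := by
    intro n; induction n with
    | zero => simp [hx0]
    | succ n ih =>
      rw [Finset.prod_range_succ, ih, ← hkey n]
      have h1 : (0:ℝ) < 1 + t (n+1) := by linarith [htpos (n+1)]
      rw [mul_inv, mul_assoc, inv_mul_cancel₀ h1.ne', mul_one]
  -- monotonicity of the branch map
  have hgmono : ∀ u w : ℝ, 0 < u → u ≤ w → u * (1 + u ^ α) ≤ w * (1 + w ^ α) := by
    intro u w hu huw
    have h1 : u ^ α ≤ w ^ α := Real.rpow_le_rpow hu.le huw hα.le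
    have h2 : 0 < u ^ α := Real.rpow_pos_of_pos hu α
    nlinarith
  have hgmono' : ∀ u w : ℝ, 0 < u → u < w → u * (1 + u ^ α) < w * (1 + w ^ α) := by
    intro u w hu huw
    have h1 : u ^ α ≤ w ^ α := Real.rpow_le_rpow hu.le huw.le hα.le
    have h2 : 0 < u ^ α := Real.rpow_pos_of_pos hu α
    nlinarith
  have hstep : ∀ k z, z ∈ Set.Ioc (x (k+2)) (x (k+1)) → MP α z ∈ Set.Ioc (x (k+1)) (x k) := by
    intro k z hz
    obtain ⟨hz1, hz2⟩ := hz
    have hzpos : 0 < z := lt_trans (hxpos (k+2)) hz1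
    have hle : z * (1 + z ^ α) ≤ x k := by
      calc z * (1 + z ^ α) ≤ x (k+1) * (1 + x (k+1) ^ α) := hgmono z _ hzpos hz2
      _ = x k := by rw [← hkey k, ht']
    have hgt : x (k+1) < z * (1 + z ^ α) := by
      calc x (k+1) = x (k+2) * (1 + x (k+2) ^ α) := by rw [← hkey (k+1), ht']
      _ < z * (1 + z ^ α) := hgmono' _ z (hxpos (k+2)) hz1
    have hMP : MP α z = z * (1 + z ^ α) := by
      simp only [MP]
      rw [if_pos (le_trans hle (hxle1 k))]
    rw [hMP]; exact ⟨hgt, hle⟩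
  have horbit : ∀ n y, y ∈ Set.Ioc (x (n+1)) (x n) → ∀ j, j ≤ n →
      (MP α)^[j] y ∈ Set.Ioc (x (n+1-j)) (x (n-j)) := by
    intro n y hy j hj
    induction j with
    | zero => simpa using hy
    | succ j ih =>
      have hj' : j ≤ n := Nat.le_of_succ_le hj
      have hz := ih hj'
      obtain ⟨k, hk⟩ : ∃ k, n - j = k + 1 := ⟨n - j - 1, by omega⟩
      have e1 : n + 1 - j = k + 2 := by omega
      have e2 : n - (j+1) = k := by omega
      have e3 : n + 1 - (j+1) = k + 1 := by omega
      rw [hk, e1] at hz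
      have hres := hstep k _ hz
      rw [Function.iterate_succ_apply', e2, e3]
      exact hres
  -- reindexing lemmas
  have hreflect1 : ∀ n : ℕ, ∏ j ∈ Finset.range n, (1 + (α+1) * t (n-j))
      = ∏ k ∈ Finset.range n, (1 + (α+1) * t (k+1)) := by
    intro n
    rw [← Finset.prod_range_reflect (fun k => 1 + (α+1) * t (k+1)) n]
    apply Finset.prod_congr rfl
    intro j hj
    have hj' := Finset.mem_range.1 hj
    have e : n - 1 - j + 1 = n - j := by omega
    rw [e]
  have hreflect2 : ∀ n : ℕ, ∏ j ∈ Finset.range n, (1 + (α+1) * t (n+1-j))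
      = ∏ k ∈ Finset.range n, (1 + (α+1) * t (k+2)) := by
    intro n
    rw [← Finset.prod_range_reflect (fun k => 1 + (α+1) * t (k+2)) n]
    apply Finset.prod_congr rfl
    intro j hj
    have hj' := Finset.mem_range.1 hj
    have e : n - 1 - j + 2 = n + 1 - j := by omega
    rw [e]
  have hq : (0:ℝ) < 1/α + 1 := by positivity
  -- upper product bound
  have hub2 : ∀ n : ℕ, ∏ k ∈ Finset.range n, (1 + (α+1) * t (k+1)) ≤ (1 + c*n) ^ (1/α+1) := by
    intro n
    have h1 : ∏ k ∈ Finset.range n, (1 + (α+1) * t (k+1))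
        ≤ ∏ k ∈ Finset.range n, (1 + t (k+1)) ^ (α+1) := by
      apply Finset.prod_le_prod
      · intro k _; nlinarith [htpos (k+1)]
      · intro k _
        have := one_add_mul_self_le_rpow_one_add
          (show (-1:ℝ) ≤ t (k+1) by linarith [htpos (k+1)]) (show (1:ℝ) ≤ α+1 by linarith)
        linarith
    have h2 : ∏ k ∈ Finset.range n, (1 + t (k+1)) ^ (α+1) = ((x n)⁻¹) ^ (α+1) := by
      rw [Real.finset_prod_rpow _ _ (fun k _ => by linarith [htpos (k+1)]) (α+1), hprod n]
    have h3 : ((x n)⁻¹) ^ (α+1) = (v n) ^ (1/α+1) := by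
      have hvn : v n = x n ^ (-α) := by
        rw [hv' n, ht' n]
        exact (Real.rpow_neg (hxpos n).le α).symm
      rw [hvn, ← Real.rpow_neg_one (x n), ← Real.rpow_mul (hxpos n).le,
        ← Real.rpow_mul (hxpos n).le]
      congr 1
      field_simp
      ring
    have h4 : (v n) ^ (1/α+1) ≤ (1 + c*n) ^ (1/α+1) :=
      Real.rpow_le_rpow (hvpos n).le (hvub n) hq.le
    calc ∏ k ∈ Finset.range n, (1 + (α+1) * t (k+1))
        ≤ ((x n)⁻¹) ^ (α+1) := by rw [← h2]; exact h1
      _ = (v n) ^ (1/α+1) := h3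
      _ ≤ (1 + c*n) ^ (1/α+1) := h4
  -- term bound for the lower estimate
  have hterm : ∀ m : ℕ, (α+1) * Real.log (1 + t m) - (α+1)^2 * (t m)^2
      ≤ Real.log (1 + (α+1) * t m) := by
    intro m
    have hu : 0 ≤ (α+1) * t m := by nlinarith [htpos m]
    have h1 := mpAux_log_ge' hu
    have h2 : Real.log (1 + t m) ≤ t m := by
      have := Real.log_le_sub_one_of_pos (show (0:ℝ) < 1 + t m by linarith [htpos m])
      linarith
    nlinarith [htpos m]
  -- tail sum bound
  have hTterm : ∀ k : ℕ, (t (k+2))^2 ≤ 1/a^2 * (1/((k:ℝ)+1) - 1/((k:ℝ)+2)) := by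
    intro k
    have hk2 : (0:ℝ) < (k:ℝ)+2 := by positivity
    have hk1 : (0:ℝ) < (k:ℝ)+1 := by positivity
    have hv2 : 1 + a*((k:ℝ)+2) ≤ v (k+2) := by
      have := hvlb (k+2); push_cast at this ⊢; linarith
    have h1 : t (k+2) ≤ (a*((k:ℝ)+2))⁻¹ := by
      have hp1 : (0:ℝ) < a*((k:ℝ)+2) := by positivity
      have hp2 : (0:ℝ) < 1 + a*((k:ℝ)+2) := by linarith
      have h1a : t (k+2) ≤ (1 + a*((k:ℝ)+2))⁻¹ := by
        have := hvt_eq (k+1)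
        have hvp := hvpos (k+2)
        rw [inv_eq_one_div, le_div_iff₀ hp2]
        calc t (k+2) * (1 + a*((k:ℝ)+2)) ≤ t (k+2) * v (k+2) :=
          mul_le_mul_of_nonneg_left hv2 (htpos (k+2)).le
        _ = 1 := by rw [mul_comm]; exact hvt_eq (k+1)
      have h1b : (1 + a*((k:ℝ)+2))⁻¹ ≤ (a*((k:ℝ)+2))⁻¹ := by
        apply inv_anti₀ hp1; linarith
      exact le_trans h1a h1b
    have h5 : 0 < t (k+2) := htpos (k+2)
    have he : 1/((k:ℝ)+1) - 1/((k:ℝ)+2) = 1/(((k:ℝ)+1)*((k:ℝ)+2)) := by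
      field_simp; ring
    rw [he]
    have hp1 : (0:ℝ) < a*((k:ℝ)+2) := by positivity
    have h6 : (t (k+2))^2 ≤ ((a*((k:ℝ)+2))⁻¹)^2 := by nlinarith
    have h7 : ((a*((k:ℝ)+2))⁻¹)^2 ≤ 1/a^2 * (1/(((k:ℝ)+1)*((k:ℝ)+2))) := by
      rw [inv_pow]
      rw [inv_le_iff_one_le_mul₀ (by positivity)]
      have : (1:ℝ)/a^2 * (1/(((k:ℝ)+1)*((k:ℝ)+2))) * (a*((k:ℝ)+2))^2
          = ((k:ℝ)+2)/((k:ℝ)+1) := by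
        field_simp
      rw [this]
      rw [le_div_iff₀ hk1]; linarith
    linarith
  have hTsum : ∀ n : ℕ, ∑ k ∈ Finset.range n, (t (k+2))^2 ≤ 1/a^2 := by
    intro n
    have h1 : ∑ k ∈ Finset.range n, (t (k+2))^2
        ≤ ∑ k ∈ Finset.range n, 1/a^2 * (1/((k:ℝ)+1) - 1/((k:ℝ)+2)) :=
      Finset.sum_le_sum (fun k _ => hTterm k)
    have h2 : ∑ k ∈ Finset.range n, 1/a^2 * (1/((k:ℝ)+1) - 1/((k:ℝ)+2))
        = 1/a^2 * (1 - 1/((n:ℝ)+1)) := by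
      rw [← Finset.mul_sum]
      congr 1
      have h3 : ∀ i : ℕ, (1:ℝ)/((i:ℝ)+1) - 1/((i:ℝ)+2)
          = (fun i : ℕ => 1/((i:ℝ)+1)) i - (fun i : ℕ => 1/((i:ℝ)+1)) (i+1) := by
        intro i; simp only; push_cast; ring_nf
      calc ∑ k ∈ Finset.range n, (1/((k:ℝ)+1) - 1/((k:ℝ)+2))
          = ∑ k ∈ Finset.range n, ((fun i : ℕ => 1/((i:ℝ)+1)) k - (fun i : ℕ => 1/((i:ℝ)+1)) (k+1)) :=
            Finset.sum_congr rfl (fun k _ => h3 k)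
        _ = (fun i : ℕ => 1/((i:ℝ)+1)) 0 - (fun i : ℕ => 1/((i:ℝ)+1)) n :=
            Finset.sum_range_sub' (fun i : ℕ => 1/((i:ℝ)+1)) n
        _ = 1 - 1/((n:ℝ)+1) := by norm_num
    have h4 : (0:ℝ) < 1/((n:ℝ)+1) := by positivity
    have h5 : (0:ℝ) < a^2 := by positivity
    calc ∑ k ∈ Finset.range n, (t (k+2))^2 ≤ 1/a^2 * (1 - 1/((n:ℝ)+1)) := le_trans h1 (le_of_eq h2)
      _ ≤ 1/a^2 := by
        have : (0:ℝ) ≤ 1/a^2 := by positivity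
        nlinarith
  set K : ℝ := (α+1) * Real.log 2 + (α+1)^2 / a^2 with hK
  clear_value K
  have hKpos : 0 < K := by rw [hK]; positivity
  -- key lower log bound
  have hPlog : ∀ n : ℕ, 1 ≤ n →
      (1/α+1) * Real.log (1 + a*n) - K
        ≤ Real.log (∏ k ∈ Finset.range n, (1 + (α+1) * t (k+2))) := by
    intro n hn
    have hfpos : ∀ k : ℕ, (0:ℝ) < 1 + (α+1) * t (k+2) := by
      intro k; nlinarith [htpos (k+2)]
    rw [Real.log_prod (fun k _ => (hfpos k).ne')]
    have h1 : ∑ k ∈ Finset.range n, ((α+1) * Real.log (1 + t (k+2)) - (α+1)^2 * (t (k+2))^2)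
        ≤ ∑ k ∈ Finset.range n, Real.log (1 + (α+1) * t (k+2)) :=
      Finset.sum_le_sum (fun k _ => hterm (k+2))
    have h2 : ∑ k ∈ Finset.range n, ((α+1) * Real.log (1 + t (k+2)) - (α+1)^2 * (t (k+2))^2)
        = (α+1) * (∑ k ∈ Finset.range n, Real.log (1 + t (k+2)))
          - (α+1)^2 * (∑ k ∈ Finset.range n, (t (k+2))^2) := by
      rw [Finset.sum_sub_distrib, Finset.mul_sum, Finset.mul_sum]
    -- the log sum via telescoping product
    have h3 : ∑ k ∈ Finset.range (n+1), Real.log (1 + t (k+1)) = - Real.log (x (n+1)) := by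
      have hne : ∀ k ∈ Finset.range (n+1), (1:ℝ) + t (k+1) ≠ 0 :=
        fun k _ => ne_of_gt (by linarith [htpos (k+1)])
      rw [← Real.log_prod hne, hprod (n+1), Real.log_inv]
    have h4 : ∑ k ∈ Finset.range (n+1), Real.log (1 + t (k+1))
        = (∑ k ∈ Finset.range n, Real.log (1 + t (k+2))) + Real.log (1 + t 1) := by
      rw [Finset.sum_range_succ' (fun k => Real.log (1 + t (k+1))) n]
    have h5 : - Real.log (x (n+1)) = Real.log (v (n+1)) / α := by
      have : v (n+1) = x (n+1) ^ (-α) := by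
        rw [hv' (n+1), ht' (n+1)]
        exact (Real.rpow_neg (hxpos (n+1)).le α).symm
      rw [this, Real.log_rpow (hxpos (n+1))]
      field_simp
    have h6 : Real.log (1 + a*n) ≤ Real.log (v (n+1)) := by
      have hn0 : (0:ℝ) ≤ (n:ℝ) := Nat.cast_nonneg n
      have hb : (0:ℝ) < 1 + a*(n:ℝ) :=
        lt_of_lt_of_le one_pos (le_add_of_nonneg_right (mul_nonneg hapos.le hn0))
      apply Real.log_le_log hb
      have h := hvlb (n+1)
      push_cast at h
      linarith [hapos]
    have h7 : Real.log (1 + t 1) ≤ Real.log 2 := by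
      have h71 : (0:ℝ) < 1 + t 1 :=
        lt_of_lt_of_le one_pos (le_add_of_nonneg_right (htpos 1).le)
      have h72 : (1:ℝ) + t 1 ≤ 2 := by linarith [htle1 1]
      exact Real.log_le_log h71 h72
    have h8 : Real.log (1 + a*n) / α - Real.log 2
        ≤ ∑ k ∈ Finset.range n, Real.log (1 + t (k+2)) := by
      have heq : (∑ k ∈ Finset.range n, Real.log (1 + t (k+2)))
          = - Real.log (x (n+1)) - Real.log (1 + t 1) := by linarith [h4, h3]
      rw [heq, h5]
      have hd : Real.log (1 + a*n) / α ≤ Real.log (v (n+1)) / α :=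
        div_le_div_of_nonneg_right h6 hα.le
      linarith
    have h9 := hTsum n
    have hla : 0 ≤ Real.log (1 + a*(n:ℝ)) :=
      Real.log_nonneg (le_add_of_nonneg_right (mul_nonneg hapos.le (Nat.cast_nonneg n)))
    calc (1/α+1) * Real.log (1 + a*n) - K
        = (α+1) * (Real.log (1 + a*n)/α - Real.log 2) - (α+1)^2 * (1/a^2) := by
          rw [hK]; field_simp; ring
      _ ≤ (α+1) * (∑ k ∈ Finset.range n, Real.log (1 + t (k+2)))
            - (α+1)^2 * (∑ k ∈ Finset.range n, (t (k+2))^2) := by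
          have hA : (α+1) * (Real.log (1 + a*n)/α - Real.log 2)
              ≤ (α+1) * (∑ k ∈ Finset.range n, Real.log (1 + t (k+2))) :=
            mul_le_mul_of_nonneg_left h8 (by linarith)
          have hB : (α+1)^2 * (∑ k ∈ Finset.range n, (t (k+2))^2) ≤ (α+1)^2 * (1/a^2) :=
            mul_le_mul_of_nonneg_left h9 (by positivity)
          linarith
      _ ≤ ∑ k ∈ Finset.range n, Real.log (1 + (α+1) * t (k+2)) := by
          rw [← h2]; exact h1
  
  have hfpos : ∀ m : ℕ, (0:ℝ) < 1 + (α+1) * t m := by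
    intro m
    have h1 : 0 ≤ (α+1) * t m := mul_nonneg (by linarith) (htpos m).le
    linarith
  -- constants
  set q : ℝ := 1/α + 1 with hqdef
  have hqpos : 0 < q := by rw [hqdef]; positivity
  clear_value q
  set K' : ℝ := K / q with hK'def
  clear_value K'
  have hK'pos : 0 < K' := by rw [hK'def]; exact div_pos hKpos hqpos
  have hqK' : q * K' = K := by rw [hK'def]; field_simp
  set N : ℕ := ⌈4 * Real.exp K' / a⌉₊ + 1 with hNdef
  clear_value N
  have hN1 : 1 ≤ N := by rw [hNdef]; omega
  have hNpos : (0:ℝ) < N := by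
    have : (1:ℝ) ≤ (N:ℝ) := by exact_mod_cast hN1
    linarith
  have hNge : 4 * Real.exp K' / a ≤ (N:ℝ) := by
    rw [hNdef]; push_cast
    have := Nat.le_ceil (4 * Real.exp K' / a)
    linarith
  have hcN : (0:ℝ) < 1 + c*N :=
    lt_of_lt_of_le one_pos (le_add_of_nonneg_right (mul_nonneg hcpos.le (Nat.cast_nonneg N)))
  set δ : ℝ := (α+1) / (1 + c*N) with hδdef
  clear_value δ
  have hδpos : 0 < δ := by rw [hδdef]; exact div_pos (by linarith) hcN
  have hlogδ : 0 < Real.log (1+δ) := Real.log_pos (by linarith)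
  set ε₀ : ℝ := min (min ((1+c)⁻¹) (a * Real.exp (-K') / 2))
      (min (Real.log (1+δ)/(q*N)) 2⁻¹) with hεdef
  clear_value ε₀
  have hεpos : 0 < ε₀ := by
    rw [hεdef]
    apply lt_min
    · apply lt_min
      · exact inv_pos.2 (by linarith)
      · exact div_pos (mul_pos hapos (Real.exp_pos _)) two_pos
    · apply lt_min
      · exact div_pos hlogδ (mul_pos hqpos hNpos)
      · norm_num
  have hε_c : ε₀ ≤ (1+c)⁻¹ := by
    rw [hεdef]; exact le_trans (min_le_left _ _) (min_le_left _ _)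
  have hε_a : ε₀ ≤ a * Real.exp (-K') / 2 := by
    rw [hεdef]; exact le_trans (min_le_left _ _) (min_le_right _ _)
  have hε_δ : ε₀ ≤ Real.log (1+δ) / (q*N) := by
    rw [hεdef]; exact le_trans (min_le_right _ _) (min_le_left _ _)
  have hε_half : ε₀ ≤ 2⁻¹ := by
    rw [hεdef]; exact le_trans (min_le_right _ _) (min_le_right _ _)
  have hεlt1 : ε₀ < 1 := lt_of_le_of_lt hε_half (by norm_num)
  refine ⟨ε₀, ⟨hεpos, hεlt1⟩, ?_⟩
  intro n hn y hy
  have hyub : ∀ j, j < n → ((MP α)^[j] y) ^ α ≤ t (n-j) ∧ t (n+1-j) ≤ ((MP α)^[j] y) ^ α := by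
    intro j hj
    obtain ⟨hgt, hle⟩ := horbit n y hy j hj.le
    have hpos : 0 < (MP α)^[j] y := lt_trans (hxpos _) hgt
    constructor
    · rw [ht']; exact Real.rpow_le_rpow hpos.le hle hα.le
    · rw [ht']; exact Real.rpow_le_rpow (hxpos _).le hgt.le hα.le
  have hMPnonneg : ∀ j, j < n → 0 ≤ ((MP α)^[j] y) ^ α := by
    intro j hj
    have hpos : 0 < (MP α)^[j] y := lt_trans (hxpos _) (horbit n y hy j hj.le).1
    exact (Real.rpow_pos_of_pos hpos α).le
  have hgpos : (0:ℝ) < 1 + ε₀ * n :=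
    lt_of_lt_of_le one_pos (le_add_of_nonneg_right (mul_nonneg hεpos.le (Nat.cast_nonneg n)))
  constructor
  · -- LOWER BOUND
    have hDlb : ∏ j ∈ Finset.range n, (1 + (α+1) * t (n+1-j)) ≤ Dfn α n y := by
      rw [Dfn]
      apply Finset.prod_le_prod
      · intro j hj; exact (hfpos _).le
      · intro j hj
        have h2 := (hyub j (Finset.mem_range.1 hj)).2
        have h3 := mul_le_mul_of_nonneg_left h2 (show (0:ℝ) ≤ α+1 by linarith)
        linarith
    rw [hreflect2 n] at hDlb
    have hPpos : 0 < ∏ k ∈ Finset.range n, (1 + (α+1) * t (k+2)) :=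
      Finset.prod_pos (fun k _ => hfpos _)
    refine le_trans ?_ hDlb
    rw [Real.rpow_le_iff_le_log hgpos hPpos]
    rcases lt_or_ge n N with hcase | hcase
    · -- small n : n < N
      obtain ⟨m, hm⟩ : ∃ m, n = m + 1 := ⟨n-1, by omega⟩
      have hsingle0 : ∀ mm : ℕ, 1 + (α+1) * t (mm+2)
          ≤ ∏ k ∈ Finset.range (mm+1), (1 + (α+1) * t (k+2)) := by
        intro mm
        rw [Finset.prod_range_succ]
        have hone' : (1:ℝ) ≤ ∏ k ∈ Finset.range mm, (1 + (α+1) * t (k+2)) := by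
          calc (1:ℝ) = ∏ _k ∈ Finset.range mm, (1:ℝ) := by simp
          _ ≤ ∏ k ∈ Finset.range mm, (1 + (α+1) * t (k+2)) := by
            apply Finset.prod_le_prod
            · intros; norm_num
            · intro k _
              have h1 : 0 ≤ (α+1) * t (k+2) := mul_nonneg (by linarith) (htpos _).le
              linarith
        exact le_mul_of_one_le_left (hfpos (mm+2)).le hone'
      have hsingle := hsingle0 m
      rw [← hm, show m + 2 = n + 1 from by omega] at hsingle
      have hvN : v (n+1) ≤ 1 + c*N := by
        have h := hvub (n+1)
        have hn1N : ((n:ℝ)+1) ≤ (N:ℝ) := by exact_mod_cast Nat.succ_le_of_lt hcase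
        have h2 := mul_le_mul_of_nonneg_left hn1N hcpos.le
        push_cast at h
        linarith
      have htN : (1 + c*(N:ℝ))⁻¹ ≤ t (n+1) := by
        have h1 : t (n+1) = (v (n+1))⁻¹ := by rw [hv' (n+1), inv_inv]
        rw [h1]
        exact inv_anti₀ (hvpos (n+1)) hvN
      have hδt : δ ≤ (α+1) * t (n+1) := by
        rw [hδdef, div_eq_mul_inv]
        exact mul_le_mul_of_nonneg_left htN (by linarith)
      have hPδ : 1 + δ ≤ ∏ k ∈ Finset.range n, (1 + (α+1) * t (k+2)) := by linarith
      have hlog1 : Real.log (1 + ε₀*n) ≤ ε₀*n := by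
        have := Real.log_le_sub_one_of_pos hgpos
        linarith
      have hnN : (n:ℝ) ≤ (N:ℝ) := by exact_mod_cast hcase.le
      have hqε : 0 ≤ q*ε₀ := mul_nonneg hqpos.le hεpos.le
      have h5 := mul_le_mul_of_nonneg_left hnN hqε
      have h6 : ε₀ * (q*N) ≤ Real.log (1+δ) := by
        rw [← le_div_iff₀ (mul_pos hqpos hNpos)]
        exact hε_δ
      have h7 := mul_le_mul_of_nonneg_left hlog1 hqpos.le
      have h8 : Real.log (1+δ) ≤ Real.log (∏ k ∈ Finset.range n, (1 + (α+1) * t (k+2))) :=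
        Real.log_le_log (by linarith) hPδ
      nlinarith [h5, h6, h7, h8]
    · -- large n : N ≤ n
      have hlow := hPlog n hn
      have hNn : (N:ℝ) ≤ (n:ℝ) := by exact_mod_cast hcase
      have h4E : 4 * Real.exp K' ≤ a * n := by
        have h1 : 4 * Real.exp K' / a ≤ (n:ℝ) := le_trans hNge hNn
        rw [div_le_iff₀ hapos] at h1
        linarith
      have hE := Real.exp_pos (-K')
      have hEE : Real.exp K' * Real.exp (-K') = 1 := by
        rw [← Real.exp_add]; simp
      have h2n : ε₀ * n ≤ (a * Real.exp (-K')/2) * n :=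
        mul_le_mul_of_nonneg_right hε_a (Nat.cast_nonneg n)
      have h3n : 4 * Real.exp K' * Real.exp (-K') ≤ a * n * Real.exp (-K') :=
        mul_le_mul_of_nonneg_right h4E hE.le
      have h3n' : (4:ℝ) ≤ a * n * Real.exp (-K') := by nlinarith [hEE, h3n]
      have hc1 : 1 + ε₀*n ≤ Real.exp (-K') * (1 + a*n) := by nlinarith [h2n, h3n', hE.le]
      have hanpos : (0:ℝ) < 1 + a*n :=
        lt_of_lt_of_le one_pos (le_add_of_nonneg_right (mul_nonneg hapos.le (Nat.cast_nonneg n)))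
      have hc2 : Real.log (1+ε₀*n) ≤ Real.log (1+a*n) - K' := by
        have h9 := Real.log_le_log hgpos hc1
        rw [Real.log_mul (Real.exp_ne_zero _) hanpos.ne', Real.log_exp] at h9
        linarith
      have h10 := mul_le_mul_of_nonneg_left hc2 hqpos.le
      nlinarith [hlow, h10, hqK']
  · -- UPPER BOUND
    have hDub : Dfn α n y ≤ ∏ j ∈ Finset.range n, (1 + (α+1) * t (n-j)) := by
      rw [Dfn]
      apply Finset.prod_le_prod
      · intro j hj
        have h1 : 0 ≤ (α+1) * ((MP α)^[j] y)^α :=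
          mul_nonneg (by linarith) (hMPnonneg j (Finset.mem_range.1 hj))
        linarith
      · intro j hj
        have h1 := (hyub j (Finset.mem_range.1 hj)).1
        have h3 := mul_le_mul_of_nonneg_left h1 (show (0:ℝ) ≤ α+1 by linarith)
        linarith
    rw [hreflect1 n] at hDub
    refine le_trans hDub (le_trans (hub2 n) ?_)
    apply Real.rpow_le_rpow
    · exact le_trans (by linarith) (le_add_of_nonneg_right (mul_nonneg hcpos.le (Nat.cast_nonneg n)) : (1:ℝ) ≤ 1 + c*n)
    · have h1 : 1 + c ≤ ε₀⁻¹ := by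
        calc 1 + c = ((1+c)⁻¹)⁻¹ := (inv_inv _).symm
        _ ≤ ε₀⁻¹ := inv_anti₀ hεpos hε_c
      have h2 : c * n ≤ ε₀⁻¹ * n :=
        mul_le_mul_of_nonneg_right (by linarith) (Nat.cast_nonneg n)
      linarith
    · exact hqpos.le
end

section
/- Let α > 0 and f the Manneville–Pomeau map of parameter α. There exist ε₁ ∈ (0,1) and C₁ > 1 such that for every n ≥ 1 and every connected component J of f^{−n}(J₀) (where J₀ = (x₁, 1]): (a) |J| ≤ |J₀|/(1+ε₁ n)^{1/α+1}; (b) for all x ∈ J, Df^n(x) ≥ (1+ε₁ n)^{1/α+1}; and (c) for all x, y ∈ J, C₁^{−1} ≤ Df^n(x)/Df^n(y) ≤ C₁. -/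
open Real Set Filter Topology

namespace MP5
variable {α x₁ : ℝ}

lemma Fmono (hα : 0 < α) {x y : ℝ} (hx0 : 0 ≤ x) (hxy : x ≤ y) :
    x * (1 + x ^ α) ≤ y * (1 + y ^ α) := by
  have h1 : (0:ℝ) ≤ 1 + x ^ α := by positivity
  have h2 : x ^ α ≤ y ^ α := Real.rpow_le_rpow hx0 hxy hα.le
  have hy0 : 0 ≤ y := hx0.trans hxy
  nlinarith [Real.rpow_nonneg hx0 α]

lemma Fmono_strict (hα : 0 < α) {x y : ℝ} (hx0 : 0 ≤ x) (hxy : x < y) :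
    x * (1 + x ^ α) < y * (1 + y ^ α) := by
  have h2 : x ^ α ≤ y ^ α := Real.rpow_le_rpow hx0 hxy.le hα.le
  have hy0 : 0 < y := lt_of_le_of_lt hx0 hxy
  nlinarith [Real.rpow_nonneg hx0 α]

lemma MP_low (hα : 0 < α) (hx₁ : x₁ ∈ Set.Ioo (0:ℝ) 1) (hfix : x₁ * (1 + x₁ ^ α) = 1)
    {t : ℝ} (h0 : 0 ≤ t) (h1 : t ≤ x₁) :
    MP α t = t * (1 + t ^ α) ∧ t * (1 + t ^ α) ≤ 1 := by
  have := Fmono hα h0 h1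
  rw [hfix] at this
  exact ⟨if_pos this, this⟩

lemma MP_high (hα : 0 < α) (hx₁ : x₁ ∈ Set.Ioo (0:ℝ) 1) (hfix : x₁ * (1 + x₁ ^ α) = 1)
    {t : ℝ} (h1 : x₁ < t) : MP α t = t * (1 + t ^ α) - 1 ∧ 1 < t * (1 + t ^ α) := by
  have := Fmono_strict hα hx₁.1.le h1
  rw [hfix] at this
  exact ⟨if_neg (not_le.mpr this), this⟩

lemma MP_mem (hα : 0 < α) {t : ℝ} (ht : t ∈ Set.Icc (0:ℝ) 1) : MP α t ∈ Set.Icc (0:ℝ) 1 := by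
  have h0 : (0:ℝ) ≤ t * (1 + t ^ α) := by
    have h := Real.rpow_nonneg ht.1 α
    have := ht.1
    positivity
  have h2 : t * (1 + t ^ α) ≤ 2 := by
    have := Fmono hα ht.1 ht.2
    simpa [Real.one_rpow] using this.trans_eq (by norm_num)
  unfold MP
  split <;> constructor <;> linarith

lemma iter_mem (hα : 0 < α) {t : ℝ} (ht : t ∈ Set.Icc (0:ℝ) 1) (n : ℕ) :
    (MP α)^[n] t ∈ Set.Icc (0:ℝ) 1 := by
  induction n with
  | zero => exact ht
  | succ n ih => rw [Function.iterate_succ_apply']; exact MP_mem hα ih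

lemma Dfn_factor_one_le (hα : 0 < α) {s : ℝ} (hs : 0 ≤ s) : 1 ≤ 1 + (α + 1) * s ^ α := by
  have := Real.rpow_nonneg hs α; nlinarith

lemma Dfn_one_le (hα : 0 < α) {z : ℝ} (hz : z ∈ Set.Icc (0:ℝ) 1) (n : ℕ) :
    1 ≤ Dfn α n z := by
  induction n with
  | zero => simp [Dfn]
  | succ n ih =>
    rw [Dfn, Finset.prod_range_succ, ← Dfn]
    have := Dfn_factor_one_le hα (iter_mem hα hz n).1
    nlinarith

lemma Dfn_pos (hα : 0 < α) {z : ℝ} (hz : z ∈ Set.Icc (0:ℝ) 1) (n : ℕ) :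
    0 < Dfn α n z := lt_of_lt_of_le one_pos (Dfn_one_le hα hz n)

lemma Dfn_succ' (n : ℕ) (z : ℝ) :
    Dfn α (n + 1) z = (1 + (α + 1) * z ^ α) * Dfn α n (MP α z) := by
  unfold Dfn
  rw [Finset.prod_range_succ']
  simp only [Function.iterate_succ_apply, Function.iterate_zero_apply]
  exact mul_comm _ _

lemma Dfn_add (k m : ℕ) (z : ℝ) :
    Dfn α (k + m) z = Dfn α k z * Dfn α m ((MP α)^[k] z) := by
  have h : ∀ j, (MP α)^[k + j] z = (MP α)^[j] ((MP α)^[k] z) := fun j => by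
    rw [add_comm, Function.iterate_add_apply]
  unfold Dfn
  rw [Finset.prod_range_add]
  simp [h]


lemma x1_pow_lt_one (hα : 0 < α) (hx₁ : x₁ ∈ Set.Ioo (0:ℝ) 1) : x₁ ^ α < 1 :=
  Real.rpow_lt_one hx₁.1.le hx₁.2 hα

lemma x1_pow_pos (hα : 0 < α) (hx₁ : x₁ ∈ Set.Ioo (0:ℝ) 1) : 0 < x₁ ^ α :=
  Real.rpow_pos_of_pos hx₁.1 α

lemma x1_half (hα : 0 < α) (hx₁ : x₁ ∈ Set.Ioo (0:ℝ) 1) (hfix : x₁ * (1 + x₁ ^ α) = 1) :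
    1/2 < x₁ := by
  have h1 := x1_pow_lt_one hα hx₁
  nlinarith [hx₁.1]

lemma rpow_tangent {p : ℝ} (hp : 1 ≤ p) {b x : ℝ} (hb : 0 < b) (hx : 0 ≤ x) :
    b ^ p + p * b ^ (p - 1) * (x - b) ≤ x ^ p := by
  have hs : -1 ≤ x / b - 1 := by
    have : 0 ≤ x / b := div_nonneg hx hb.le
    linarith
  have h := one_add_mul_self_le_rpow_one_add hs hp
  have h1 : (1 + (x / b - 1)) = x / b := by ring
  rw [h1, Real.div_rpow hx hb.le] at h
  have hbp : 0 < b ^ p := Real.rpow_pos_of_pos hb p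
  have h2 : (1 + p * (x / b - 1)) * b ^ p ≤ x ^ p := by
    calc (1 + p * (x / b - 1)) * b ^ p ≤ (x ^ p / b ^ p) * b ^ p := by
          exact mul_le_mul_of_nonneg_right h hbp.le
      _ = x ^ p := by field_simp
  have h3 : b ^ (p - 1) = b ^ p / b := by
    rw [Real.rpow_sub hb, Real.rpow_one]
  rw [h3]
  have h4 : (1 + p * (x / b - 1)) * b ^ p = b ^ p + p * (b ^ p / b) * (x - b) := by
    field_simp
  linarith [h4 ▸ h2]

lemma mul_self_rpow (hα : 0 < α) {z : ℝ} (hz : 0 ≤ z) : z * z ^ α = z ^ (α + 1) := by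
  rcases eq_or_lt_of_le hz with h | h
  · rw [← h, Real.zero_rpow hα.ne', Real.zero_rpow (by positivity), mul_zero]
  · rw [Real.rpow_add h, Real.rpow_one, mul_comm]

lemma F_eq (hα : 0 < α) {z : ℝ} (hz : 0 ≤ z) : z * (1 + z ^ α) = z + z ^ (α + 1) := by
  rw [mul_add, mul_one, mul_self_rpow hα hz]

lemma pow_diff_lower (hα : 0 < α) {z w : ℝ} (hz : 0 ≤ z) (hzw : z ≤ w) :
    z ^ (α + 1) + (α + 1) * z ^ α * (w - z) ≤ w ^ (α + 1) := by
  rcases eq_or_lt_of_le hz with h | h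
  · rw [← h, Real.zero_rpow hα.ne', Real.zero_rpow (by positivity)]
    simpa using Real.rpow_nonneg (h ▸ hzw) (α + 1)
  · have := rpow_tangent (p := α + 1) (by linarith) h (hz.trans hzw)
    simpa using this

lemma pow_diff_upper (hα : 0 < α) {z w : ℝ} (hz : 0 ≤ z) (hzw : z ≤ w) :
    w ^ (α + 1) - z ^ (α + 1) ≤ (α + 1) * w ^ α * (w - z) := by
  rcases eq_or_lt_of_le (hz.trans hzw) with h | h
  · have hz0 : z = 0 := le_antisymm (h ▸ hzw) hz
    have hw0 : w = 0 := h.symm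
    simp [hz0, hw0]
  · have h0 := rpow_tangent (p := α + 1) (by linarith) h hz
    have h' : w ^ (α+1) + (α+1) * w ^ α * (z - w) ≤ z ^ (α+1) := by simpa using h0
    nlinarith [h']

lemma F_conv (hα : 0 < α) {z w : ℝ} (hz : 0 ≤ z) (hzw : z ≤ w) :
    z * (1 + z ^ α) + (1 + (α + 1) * z ^ α) * (w - z) ≤ w * (1 + w ^ α) := by
  rw [F_eq hα hz, F_eq hα (hz.trans hzw)]
  have := pow_diff_lower hα hz hzw
  nlinarith

lemma F_lip (hα : 0 < α) {z w : ℝ} (hz : 0 ≤ z) (hzw : z ≤ w) (hw1 : w ≤ 1) :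
    w * (1 + w ^ α) - z * (1 + z ^ α) ≤ (2 + α) * (w - z) := by
  rw [F_eq hα hz, F_eq hα (hz.trans hzw)]
  have h1 := pow_diff_upper hα hz hzw
  have h2 : w ^ α ≤ 1 := Real.rpow_le_one (hz.trans hzw) hw1 hα.le
  have h3 : (α + 1) * w ^ α * (w - z) ≤ (α + 1) * (w - z) := by
    nlinarith [mul_nonneg (mul_nonneg (by linarith : (0:ℝ) ≤ α + 1) (sub_nonneg.mpr hzw))
      (sub_nonneg.mpr h2)]
  linarith

lemma bern_low (hα : 0 < α) {t : ℝ} (h0 : 0 ≤ t) (h1 : t ≤ 1) :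
    1 + α / 2 * t ≤ (1 + t) ^ α := by
  rcases le_or_gt 1 α with h | h
  · have := one_add_mul_self_le_rpow_one_add (s := t) (by linarith) h
    nlinarith
  · have h2 : (1 + t) ^ (1 - α) ≤ 1 + (1 - α) * t :=
      rpow_one_add_le_one_add_mul_self (by linarith) (by linarith) (by linarith)
    have hpos : (0:ℝ) < 1 + t := by linarith
    have hkey : (1 + t) ^ α * (1 + t) ^ (1 - α) = 1 + t := by
      rw [← Real.rpow_add hpos]; norm_num
    have hnn : 0 ≤ (1 + t) ^ α := Real.rpow_nonneg hpos.le α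
    have h3 : 1 + t ≤ (1 + t) ^ α * (1 + (1 - α) * t) := by
      calc 1 + t = (1 + t) ^ α * (1 + t) ^ (1 - α) := hkey.symm
        _ ≤ (1 + t) ^ α * (1 + (1 - α) * t) := mul_le_mul_of_nonneg_left h2 hnn
    by_contra hcon
    push_neg at hcon
    have hpos2 : (0:ℝ) < 1 + (1 - α) * t := by nlinarith
    have h4 : (1 + t) ^ α * (1 + (1 - α) * t) < (1 + α / 2 * t) * (1 + (1 - α) * t) :=
      mul_lt_mul_of_pos_right hcon hpos2
    have ht2 : t ^ 2 ≤ t := by nlinarith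
    have h5 : (1 + α / 2 * t) * (1 + (1 - α) * t) ≤ 1 + t := by
      nlinarith [mul_nonneg hα.le (sub_nonneg.mpr ht2),
        mul_nonneg (mul_nonneg hα.le hα.le) (sq_nonneg t)]
    linarith

lemma log_ge {s : ℝ} (hs : 0 ≤ s) : s / (1 + s) ≤ Real.log (1 + s) := by
  have hpos : (0:ℝ) < 1 + s := by linarith
  have h := Real.log_le_sub_one_of_pos (x := (1 + s)⁻¹) (by positivity)
  rw [Real.log_inv] at h
  have : (1 + s)⁻¹ - 1 = -(s / (1 + s)) := by field_simp; ring
  rw [this] at h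
  linarith

lemma bern_up2 {p t : ℝ} (hp : 1 ≤ p) (ht : 0 ≤ t) :
    (1 + t) ^ p ≤ (1 + p * t) * Real.exp (p ^ 2 * t ^ 2) := by
  have hpos : (0:ℝ) < 1 + t := by linarith
  have hppos : (0:ℝ) < 1 + p * t := by nlinarith
  rw [Real.rpow_def_of_pos hpos, ← Real.exp_log hppos, ← Real.exp_add]
  apply Real.exp_le_exp.mpr
  have h1 : Real.log (1 + t) ≤ t := by
    have := Real.log_le_sub_one_of_pos hpos; linarith
  have h2 : p * t / (1 + p * t) ≤ Real.log (1 + p * t) := log_ge (by nlinarith)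
  have hpt : 0 ≤ p * t := mul_nonneg (by linarith) ht
  have h3 : p * t - p ^ 2 * t ^ 2 ≤ p * t / (1 + p * t) := by
    rw [le_div_iff₀ hppos]
    nlinarith [pow_nonneg hpt 3]
  have h4 := mul_le_mul_of_nonneg_right h1 (by linarith : (0:ℝ) ≤ p)
  linarith

lemma small_orbit (hα : 0 < α) (hx₁ : x₁ ∈ Set.Ioo (0:ℝ) 1) (hfix : x₁ * (1 + x₁ ^ α) = 1)
    (m : ℕ) : ∀ s : ℝ, 0 ≤ s → s ≤ x₁ * (1/2) ^ m → (MP α)^[m] s ≤ x₁ := by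
  induction m with
  | zero => intro s h0 hs; simpa using hs
  | succ m ih =>
    intro s h0 hs
    have hpowle : (1/2 : ℝ) ^ (m+1) ≤ 1 := by
      apply pow_le_one₀ <;> norm_num
    have hsx : s ≤ x₁ := hs.trans (by nlinarith [hx₁.1])
    have hs1 : s ≤ 1 := hsx.trans hx₁.2.le
    have hMP := (MP_low hα hx₁ hfix h0 hsx).1
    have hsp : s ^ α ≤ 1 := Real.rpow_le_one h0 hs1 hα.le
    have hF2 : s * (1 + s ^ α) ≤ 2 * s := by nlinarith
    have hF0 : 0 ≤ s * (1 + s ^ α) := by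
      have := Real.rpow_nonneg h0 α; positivity
    rw [Function.iterate_succ_apply, hMP]
    apply ih _ hF0
    calc s * (1 + s ^ α) ≤ 2 * s := hF2
      _ ≤ x₁ * (1/2) ^ m := by
          rw [pow_succ] at hs; linarith

lemma F_contOn (hα : 0 < α) (s : Set ℝ) : ContinuousOn (fun x : ℝ => x * (1 + x ^ α)) s := by
  apply ContinuousOn.mul continuousOn_id
  exact ContinuousOn.add continuousOn_const
    (ContinuousOn.rpow_const continuousOn_id (fun x _ => Or.inr hα.le))

/-- The interval hypothesis: all points between `z` and `w` are in `[0,1]` and land above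
`x₁` at time `m`. -/
def Hyp (α x₁ : ℝ) (m : ℕ) (z w : ℝ) : Prop :=
  z ≤ w ∧ ∀ t, z ≤ t → t ≤ w → 0 ≤ t ∧ t ≤ 1 ∧ x₁ < (MP α)^[m] t

lemma step (hα : 0 < α) (hx₁ : x₁ ∈ Set.Ioo (0:ℝ) 1) (hfix : x₁ * (1 + x₁ ^ α) = 1)
    (n : ℕ) {z w : ℝ} (h : Hyp α x₁ (n+1) z w) :
    MP α z ≤ MP α w
    ∧ (∀ s, MP α z ≤ s → s ≤ MP α w → ∃ t, z ≤ t ∧ t ≤ w ∧ MP α t = s)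
    ∧ (1 + (α+1) * z ^ α) * (w - z) ≤ MP α w - MP α z := by
  obtain ⟨hzw, H⟩ := h
  obtain ⟨hz0, hz1, -⟩ := H z le_rfl hzw
  obtain ⟨hw0, hw1, -⟩ := H w hzw le_rfl
  have dich : w ≤ x₁ ∨ x₁ < z := by
    by_contra hc
    push_neg at hc
    obtain ⟨hxw, hzx⟩ := hc
    have hdpos : 0 < x₁ * (1/2) ^ n / (2 + α) := by
      have := hx₁.1; positivity
    set d := x₁ * (1/2) ^ n / (2 + α) with hd
    set t := min w (x₁ + d) with htdef
    have ht1 : x₁ < t := lt_min hxw (by linarith)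
    have htw : t ≤ w := min_le_left _ _
    have htz : z ≤ t := le_trans hzx ht1.le
    obtain ⟨ht0, htle1, hgt⟩ := H t htz htw
    have hMPt := (MP_high hα hx₁ hfix ht1).1
    have hFt1 := (MP_high hα hx₁ hfix ht1).2
    have hlip := F_lip hα hx₁.1.le ht1.le htle1
    rw [hfix] at hlip
    have htd : t - x₁ ≤ d := by
      have : t ≤ x₁ + d := min_le_right _ _
      linarith
    have hsmall : MP α t ≤ x₁ * (1/2) ^ n := by
      rw [hMPt]
      have h2a : (0:ℝ) < 2 + α := by linarith
      have : (2 + α) * (t - x₁) ≤ (2 + α) * d := by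
        exact mul_le_mul_of_nonneg_left htd h2a.le
      have hdd : (2 + α) * d = x₁ * (1/2) ^ n := by
        rw [hd]; field_simp
      linarith
    have hMP0 : 0 ≤ MP α t := by rw [hMPt]; linarith
    have hle := small_orbit hα hx₁ hfix n (MP α t) hMP0 hsmall
    rw [← Function.iterate_succ_apply] at hle
    exact absurd hgt (not_lt.mpr hle)
  rcases dich with hlow | hhigh
  · -- low branch: all of [z,w] uses F
    have hMPz := (MP_low hα hx₁ hfix hz0 (hzw.trans hlow)).1
    have hMPw := (MP_low hα hx₁ hfix hw0 hlow).1
    refine ⟨?_, ?_, ?_⟩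
    · rw [hMPz, hMPw]; exact Fmono hα hz0 hzw
    · intro s hs1 hs2
      rw [hMPz] at hs1; rw [hMPw] at hs2
      have := intermediate_value_Icc hzw (F_contOn hα (Set.Icc z w))
      obtain ⟨t, ht, hts⟩ := this ⟨hs1, hs2⟩
      refine ⟨t, ht.1, ht.2, ?_⟩
      rw [(MP_low hα hx₁ hfix (hz0.trans ht.1) (ht.2.trans hlow)).1]
      exact hts
    · rw [hMPz, hMPw]
      have := F_conv hα hz0 hzw
      linarith
  · -- high branch
    have hMPz := (MP_high hα hx₁ hfix hhigh).1
    have hMPw := (MP_high hα hx₁ hfix (hhigh.trans_le hzw)).1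
    refine ⟨?_, ?_, ?_⟩
    · rw [hMPz, hMPw]
      have := Fmono hα hz0 hzw; linarith
    · intro s hs1 hs2
      rw [hMPz] at hs1; rw [hMPw] at hs2
      have hIVT := intermediate_value_Icc hzw (F_contOn hα (Set.Icc z w))
      have hmem : s + 1 ∈ Set.Icc (z * (1 + z ^ α)) (w * (1 + w ^ α)) :=
        ⟨by linarith, by linarith⟩
      obtain ⟨t, ht, hts⟩ := hIVT hmem
      refine ⟨t, ht.1, ht.2, ?_⟩
      rw [(MP_high hα hx₁ hfix (hhigh.trans_le ht.1)).1]
      have hts' : t * (1 + t ^ α) = s + 1 := hts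
      linarith
    · rw [hMPz, hMPw]
      have := F_conv hα hz0 hzw
      linarith

lemma Hyp_step (hα : 0 < α) (hx₁ : x₁ ∈ Set.Ioo (0:ℝ) 1) (hfix : x₁ * (1 + x₁ ^ α) = 1)
    (n : ℕ) {z w : ℝ} (h : Hyp α x₁ (n+1) z w) : Hyp α x₁ n (MP α z) (MP α w) := by
  obtain ⟨hmono, hsurj, -⟩ := step hα hx₁ hfix n h
  refine ⟨hmono, fun s hs1 hs2 => ?_⟩
  obtain ⟨t, htz, htw, hts⟩ := hsurj s hs1 hs2
  obtain ⟨ht0, ht1, htgt⟩ := h.2 t htz htw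
  have hmem := MP_mem hα ⟨ht0, ht1⟩
  rw [hts] at hmem
  rw [Function.iterate_succ_apply] at htgt
  rw [hts] at htgt
  exact ⟨hmem.1, hmem.2, htgt⟩

lemma Hyp_iter (hα : 0 < α) (hx₁ : x₁ ∈ Set.Ioo (0:ℝ) 1) (hfix : x₁ * (1 + x₁ ^ α) = 1)
    {n : ℕ} {z w : ℝ} (h : Hyp α x₁ n z w) :
    ∀ j, j ≤ n → Hyp α x₁ (n - j) ((MP α)^[j] z) ((MP α)^[j] w) := by
  intro j
  induction j with
  | zero => intro _; simpa using h
  | succ j ih =>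
    intro hj
    have hj' : j ≤ n := le_of_lt (Nat.lt_of_succ_le hj)
    have prev := ih hj'
    have heq : n - j = (n - (j+1)) + 1 := by omega
    rw [heq] at prev
    have hh := Hyp_step hα hx₁ hfix _ prev
    rw [Function.iterate_succ_apply', Function.iterate_succ_apply']
    exact hh

lemma expand (hα : 0 < α) (hx₁ : x₁ ∈ Set.Ioo (0:ℝ) 1) (hfix : x₁ * (1 + x₁ ^ α) = 1) :
    ∀ (n : ℕ) (z w : ℝ), Hyp α x₁ n z w →
      Dfn α n z * (w - z) ≤ (MP α)^[n] w - (MP α)^[n] z := by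
  intro n
  induction n with
  | zero => intro z w h; simp [Dfn]
  | succ n ih =>
    intro z w h
    obtain ⟨-, -, hderiv⟩ := step hα hx₁ hfix n h
    have hHyp' := Hyp_step hα hx₁ hfix n h
    have hz01 : z ∈ Set.Icc (0:ℝ) 1 := by
      obtain ⟨h0, h1, -⟩ := h.2 z le_rfl h.1; exact ⟨h0, h1⟩
    have hDpos : 0 ≤ Dfn α n (MP α z) := (Dfn_pos hα (MP_mem hα hz01) n).le
    have hIH := ih (MP α z) (MP α w) hHyp'
    rw [Function.iterate_succ_apply, Function.iterate_succ_apply]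
    calc Dfn α (n+1) z * (w - z)
        = Dfn α n (MP α z) * ((1 + (α+1) * z ^ α) * (w - z)) := by
          rw [Dfn_succ']; ring
      _ ≤ Dfn α n (MP α z) * (MP α w - MP α z) := mul_le_mul_of_nonneg_left hderiv hDpos
      _ ≤ (MP α)^[n] (MP α w) - (MP α)^[n] (MP α z) := hIH

/-- Constants of the construction. -/
noncomputable def lam (α x₁ : ℝ) : ℝ := 1 + (α+1) * x₁ ^ α
noncomputable def del2 (α x₁ : ℝ) : ℝ := (α+1) * (x₁/2) ^ α
noncomputable def Kc (α : ℝ) : ℝ := (α+1)^2 * (2/α)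
noncomputable def c6 (α : ℝ) : ℝ := α/2 * (1/2 : ℝ) ^ α
noncomputable def cc (α x₁ : ℝ) : ℝ := Real.exp (-(Kc α)) * x₁ ^ (α+1)
noncomputable def sig (α x₁ : ℝ) : ℝ := (cc α x₁) ^ (α/(α+1)) * c6 α
noncomputable def K1 (α x₁ : ℝ) : ℕ := ⌈4 / sig α x₁⌉₊ + 2
noncomputable def c4 (α x₁ : ℝ) : ℝ :=
  min (sig α x₁ / 4)
    (min (((1 + del2 α x₁) ^ (α/(α+1)) - 1) / K1 α x₁) ((lam α x₁) ^ (α/(α+1)) - 1))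
noncomputable def eps1 (α x₁ : ℝ) : ℝ := min (c4 α x₁) (1/2)

attribute [irreducible] lam del2 Kc c6 cc sig K1 c4 eps1

lemma rpow_inv_beta (hα : 0 < α) {x : ℝ} (hx : 0 ≤ x) :
    (x ^ (α/(α+1))) ^ (1/α + 1) = x := by
  have h1 : α ≠ 0 := hα.ne'
  have h2 : α + 1 ≠ 0 := by positivity
  rw [← Real.rpow_mul hx]
  rw [show α/(α+1) * (1/α + 1) = 1 by field_simp; ring]
  exact Real.rpow_one x

lemma beta_nonneg (hα : 0 < α) : (0:ℝ) ≤ 1/α + 1 := by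
  have := one_div_nonneg.mpr hα.le; linarith

lemma lam_gt_one (hα : 0 < α) (hx₁ : x₁ ∈ Set.Ioo (0:ℝ) 1) : 1 < lam α x₁ := by
  have := x1_pow_pos hα hx₁
  unfold lam; nlinarith

lemma del2_pos (hα : 0 < α) (hx₁ : x₁ ∈ Set.Ioo (0:ℝ) 1) : 0 < del2 α x₁ := by
  have : (0:ℝ) < (x₁/2) ^ α := Real.rpow_pos_of_pos (by linarith [hx₁.1]) α
  unfold del2; nlinarith

lemma cc_pos (hα : 0 < α) (hx₁ : x₁ ∈ Set.Ioo (0:ℝ) 1) : 0 < cc α x₁ := by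
  have : (0:ℝ) < x₁ ^ (α+1) := Real.rpow_pos_of_pos hx₁.1 _
  unfold cc; positivity

lemma c6_pos (hα : 0 < α) : 0 < c6 α := by
  have : (0:ℝ) < (1/2 : ℝ) ^ α := Real.rpow_pos_of_pos (by norm_num) α
  unfold c6; positivity

lemma sig_pos (hα : 0 < α) (hx₁ : x₁ ∈ Set.Ioo (0:ℝ) 1) : 0 < sig α x₁ := by
  have h1 : (0:ℝ) < (cc α x₁) ^ (α/(α+1)) := Real.rpow_pos_of_pos (cc_pos hα hx₁) _
  have := c6_pos hα
  unfold sig; positivity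

lemma K1_pos (α x₁ : ℝ) : 0 < K1 α x₁ := by unfold K1; omega

lemma c4_pos (hα : 0 < α) (hx₁ : x₁ ∈ Set.Ioo (0:ℝ) 1) : 0 < c4 α x₁ := by
  have h1 : 0 < sig α x₁ / 4 := by linarith [sig_pos hα hx₁]
  have hb : 0 < α/(α+1) := by positivity
  have h2 : 1 < (1 + del2 α x₁) ^ (α/(α+1)) := by
    rw [Real.one_lt_rpow_iff_of_pos (by linarith [del2_pos hα hx₁])]
    exact Or.inl ⟨by linarith [del2_pos hα hx₁], hb⟩
  have h3 : 1 < (lam α x₁) ^ (α/(α+1)) := by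
    rw [Real.one_lt_rpow_iff_of_pos (by linarith [lam_gt_one hα hx₁])]
    exact Or.inl ⟨lam_gt_one hα hx₁, hb⟩
  have h4 : (0:ℝ) < K1 α x₁ := by exact_mod_cast K1_pos α x₁
  rw [c4]
  exact lt_min h1 (lt_min (div_pos (by linarith) h4) (by linarith))

lemma eps1_pos (hα : 0 < α) (hx₁ : x₁ ∈ Set.Ioo (0:ℝ) 1) : 0 < eps1 α x₁ := by
  rw [eps1]; exact lt_min (c4_pos hα hx₁) (by norm_num)

lemma eps1_lt_one (hα : 0 < α) (hx₁ : x₁ ∈ Set.Ioo (0:ℝ) 1) : eps1 α x₁ < 1 := by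
  rw [eps1]; exact lt_of_le_of_lt (min_le_right _ _) (by norm_num)

lemma eps1_le_c4 (α x₁ : ℝ) : eps1 α x₁ ≤ c4 α x₁ := by
  rw [eps1]; exact min_le_left _ _

lemma arith1 {S P c6v C4 κ : ℝ} (hP : 0 < P) (hc6 : 0 < c6v) (heq : P * c6v = S)
    (hC4 : C4 ≤ S/4) (hC4nn : 0 ≤ C4) (hκ2 : 2 ≤ κ) (hσκ : 4 ≤ S * κ) :
    1 + C4 * κ ≤ P * (1 + c6v * (κ - 1)) := by
  have hSpos : 0 < S := by rw [← heq]; positivity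
  have h1 : P * (1 + c6v * (κ - 1)) ≥ P * (c6v * (κ - 1)) := by nlinarith
  have h2 : P * (c6v * (κ - 1)) = S * (κ - 1) := by rw [← heq]; ring
  have h3 : S * (κ - 1) ≥ S * (κ/2) := by nlinarith
  have h5 : S * κ/4 ≥ 1 := by linarith
  have h6 : S * κ/4 ≥ C4 * κ := by nlinarith
  linarith

lemma iter_pos_low (hα : 0 < α) (hx₁ : x₁ ∈ Set.Ioo (0:ℝ) 1) (hfix : x₁ * (1 + x₁ ^ α) = 1)
    {z : ℝ} (hz : 0 < z) (k : ℕ) (hlow : ∀ j, j < k → (MP α)^[j] z ≤ x₁) :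
    ∀ j, j ≤ k → 0 < (MP α)^[j] z := by
  intro j
  induction j with
  | zero => intro _; exact hz
  | succ j ih =>
    intro hj
    have hj' : j ≤ k := by omega
    have hjk : j < k := by omega
    have hpos := ih hj'
    have hle := hlow j hjk
    rw [Function.iterate_succ_apply', (MP_low hα hx₁ hfix hpos.le hle).1]
    have := Real.rpow_nonneg hpos.le α
    positivity

lemma esc (hα : 0 < α) (hx₁ : x₁ ∈ Set.Ioo (0:ℝ) 1) (hfix : x₁ * (1 + x₁ ^ α) = 1) :
    ∀ (k : ℕ), 1 ≤ k → ∀ z : ℝ, 0 < z → (∀ j, j < k → (MP α)^[j] z ≤ x₁) →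
      1 + c6 α * ((k : ℝ) - 1) ≤ z ^ (-α) := by
  intro k
  induction k with
  | zero => omega
  | succ k ih =>
    intro _ z hz hlow
    have hzx : z ≤ x₁ := hlow 0 (by omega)
    rcases Nat.eq_zero_or_pos k with hk0 | hkpos
    · subst hk0
      norm_num
      exact Real.one_le_rpow_of_pos_of_le_one_of_nonpos hz (hzx.trans hx₁.2.le) (by linarith)
    · -- step case
      set t := z ^ α with htdef
      have htpos : 0 < t := Real.rpow_pos_of_pos hz α
      have ht1 : t ≤ 1 := by
        rw [htdef]
        calc z ^ α ≤ x₁ ^ α := Real.rpow_le_rpow hz.le hzx hα.le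
          _ ≤ 1 := (x1_pow_lt_one hα hx₁).le
      have hz' : MP α z = z * (1 + t) := (MP_low hα hx₁ hfix hz.le hzx).1
      have hz'pos : 0 < MP α z := by rw [hz']; positivity
      have hlow' : ∀ j, j < k → (MP α)^[j] (MP α z) ≤ x₁ := by
        intro j hj
        rw [← Function.iterate_succ_apply]
        exact hlow (j+1) (by omega)
      have hIH := ih hkpos (MP α z) hz'pos hlow'
      -- key step : (MP α z) ^ (-α) + c6 α ≤ z ^ (-α)
      set u := (1 + t) ^ α with hudef
      have hu1 : 1 + α/2 * t ≤ u := bern_low hα htpos.le ht1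
      have hupos : 0 < u := by nlinarith
      have hu2 : u ≤ (2:ℝ) ^ α := Real.rpow_le_rpow (by linarith) (by linarith) hα.le
      have hZ : z ^ (-α) = t⁻¹ := by rw [Real.rpow_neg hz.le]
      have hZ' : (MP α z) ^ (-α) = t⁻¹ * u⁻¹ := by
        rw [hz', Real.mul_rpow hz.le (by linarith), Real.rpow_neg hz.le,
          Real.rpow_neg (by linarith : (0:ℝ) ≤ 1 + t), ← htdef, ← hudef]
      have hhalfpow : (1/2 : ℝ) ^ α * (2:ℝ) ^ α = 1 := by
        rw [← Real.mul_rpow (by norm_num) (by norm_num)]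
        norm_num
      have key : c6 α * (t * u) ≤ u - 1 := by
        have e1 : c6 α * (t * u) ≤ c6 α * (t * (2:ℝ)^α) := by
          apply mul_le_mul_of_nonneg_left _ (c6_pos hα).le
          exact mul_le_mul_of_nonneg_left hu2 htpos.le
        have e2 : c6 α * (t * (2:ℝ)^α) = α/2 * t := by
          unfold c6; linear_combination (α/2 * t) * hhalfpow
        linarith
      have hstep : (MP α z) ^ (-α) + c6 α ≤ z ^ (-α) := by
        rw [hZ, hZ']
        rw [← sub_nonneg]
        have expand : t⁻¹ - (t⁻¹ * u⁻¹ + c6 α) = (u - 1 - c6 α * (t * u)) / (t * u) := by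
          field_simp
          ring
        rw [expand]
        apply div_nonneg _ (by positivity)
        linarith
      have hcast : ((k:ℝ) + 1) - 1 = ((k:ℝ) - 1) + 1 := by ring
      push_cast
      rw [hcast]
      have := c6_pos hα
      nlinarith [hIH, hstep]

lemma prodB (hα : 0 < α) (hx₁ : x₁ ∈ Set.Ioo (0:ℝ) 1) (hfix : x₁ * (1 + x₁ ^ α) = 1) :
    ∀ (k : ℕ) (z : ℝ), z ∈ Set.Icc (0:ℝ) 1 → 0 < z → (∀ j, j < k → (MP α)^[j] z ≤ x₁) →
      ((MP α)^[k] z) ^ (α+1) ≤ Real.exp (Kc α) * z ^ (α+1) * Dfn α k z := by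
  intro k z hz01 hz hlow
  -- part 1 : with explicit exp factors
  have part1 : ∀ m, m ≤ k → ((MP α)^[m] z) ^ (α+1) ≤
      z ^ (α+1) * ∏ j ∈ Finset.range m,
        ((1 + (α+1) * ((MP α)^[j] z) ^ α) * Real.exp ((α+1)^2 * (((MP α)^[j] z) ^ α)^2)) := by
    intro m
    induction m with
    | zero => intro _; simp
    | succ m ih =>
      intro hm
      have hm' : m ≤ k := by omega
      have hym : 0 < (MP α)^[m] z :=
        iter_pos_low hα hx₁ hfix hz k hlow m hm'
      have hymx : (MP α)^[m] z ≤ x₁ := hlow m (by omega)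
      set y := (MP α)^[m] z with hy
      set t := y ^ α with ht
      have htpos : 0 < t := Real.rpow_pos_of_pos hym α
      have hstep : (MP α)^[m+1] z = y * (1 + t) := by
        rw [Function.iterate_succ_apply', ← hy, (MP_low hα hx₁ hfix hym.le hymx).1]
      have hbern := bern_up2 (p := α+1) (t := t) (by linarith) htpos.le
      have hrw : ((MP α)^[m+1] z) ^ (α+1) = y ^ (α+1) * (1+t) ^ (α+1) := by
        rw [hstep, Real.mul_rpow hym.le (by linarith)]
      rw [hrw, Finset.prod_range_succ]
      have hIH := ih hm'
      have hynn : (0:ℝ) ≤ y ^ (α+1) := Real.rpow_nonneg hym.le _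
      calc y ^ (α+1) * (1+t) ^ (α+1)
          ≤ y ^ (α+1) * ((1 + (α+1)*t) * Real.exp ((α+1)^2 * t^2)) :=
            mul_le_mul_of_nonneg_left hbern hynn
        _ ≤ (z ^ (α+1) * ∏ j ∈ Finset.range m,
              ((1 + (α+1) * ((MP α)^[j] z) ^ α) * Real.exp ((α+1)^2 * (((MP α)^[j] z) ^ α)^2)))
            * ((1 + (α+1)*t) * Real.exp ((α+1)^2 * t^2)) := by
            apply mul_le_mul_of_nonneg_right hIH
            have h1 : (0:ℝ) ≤ 1 + (α+1)*t := by nlinarith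
            positivity
        _ = _ := by rw [ht, hy]; ring
  -- part 2 : sum of squares bound
  have part2 : ∑ j ∈ Finset.range k, (((MP α)^[j] z) ^ α)^2 ≤ 2/α := by
    have hper : ∀ j ∈ Finset.range k, α/2 * (((MP α)^[j] z) ^ α)^2 ≤
        ((MP α)^[j+1] z) ^ α - ((MP α)^[j] z) ^ α := by
      intro j hj
      rw [Finset.mem_range] at hj
      have hym : 0 < (MP α)^[j] z := iter_pos_low hα hx₁ hfix hz k hlow j hj.le
      have hymx : (MP α)^[j] z ≤ x₁ := hlow j hj
      set y := (MP α)^[j] z with hy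
      set t := y ^ α with ht
      have htpos : 0 < t := Real.rpow_pos_of_pos hym α
      have ht1 : t ≤ 1 := by
        rw [ht]
        calc y ^ α ≤ x₁ ^ α := Real.rpow_le_rpow hym.le hymx hα.le
          _ ≤ 1 := (x1_pow_lt_one hα hx₁).le
      have hstep : (MP α)^[j+1] z = y * (1 + t) := by
        rw [Function.iterate_succ_apply', ← hy, (MP_low hα hx₁ hfix hym.le hymx).1]
      have hlowb := bern_low hα htpos.le ht1
      have : ((MP α)^[j+1] z) ^ α = t * (1+t) ^ α := by
        rw [hstep, Real.mul_rpow hym.le (by linarith), ← ht]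
      rw [this]
      nlinarith [Real.rpow_nonneg (by linarith : (0:ℝ) ≤ 1+t) α]
    have htel : ∑ j ∈ Finset.range k,
        (((MP α)^[j+1] z) ^ α - ((MP α)^[j] z) ^ α) = ((MP α)^[k] z) ^ α - z ^ α := by
      rw [Finset.sum_range_sub (fun j => ((MP α)^[j] z) ^ α)]
      simp
    have hsum := Finset.sum_le_sum hper
    rw [htel] at hsum
    rw [← Finset.mul_sum] at hsum
    have hk1 : ((MP α)^[k] z) ^ α ≤ 1 :=
      Real.rpow_le_one (iter_mem hα hz01 k).1 (iter_mem hα hz01 k).2 hα.le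
    have hz0 : 0 ≤ z ^ α := Real.rpow_nonneg hz.le α
    have h2 : α/2 * ∑ j ∈ Finset.range k, (((MP α)^[j] z) ^ α)^2 ≤ 1 := by linarith
    rw [le_div_iff₀ hα]
    nlinarith [h2]
  -- combine
  have hsplit : ∏ j ∈ Finset.range k,
      ((1 + (α+1) * ((MP α)^[j] z) ^ α) * Real.exp ((α+1)^2 * (((MP α)^[j] z) ^ α)^2))
      = Dfn α k z * Real.exp (∑ j ∈ Finset.range k, (α+1)^2 * (((MP α)^[j] z) ^ α)^2) := by
    rw [Finset.prod_mul_distrib, Real.exp_sum, Dfn]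
  have hexp : Real.exp (∑ j ∈ Finset.range k, (α+1)^2 * (((MP α)^[j] z) ^ α)^2)
      ≤ Real.exp (Kc α) := by
    apply Real.exp_le_exp.mpr
    rw [← Finset.mul_sum]
    unfold Kc
    nlinarith [part2, sq_nonneg (α+1)]
  have hfin := part1 k le_rfl
  rw [hsplit] at hfin
  have hDpos : 0 < Dfn α k z := Dfn_pos hα hz01 k
  have hznn : (0:ℝ) ≤ z ^ (α+1) := Real.rpow_nonneg hz.le _
  calc ((MP α)^[k] z) ^ (α+1)
      ≤ z ^ (α+1) * (Dfn α k z * Real.exp (∑ j ∈ Finset.range k, (α+1)^2 * (((MP α)^[j] z) ^ α)^2)) := hfin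
    _ ≤ z ^ (α+1) * (Dfn α k z * Real.exp (Kc α)) := by
        apply mul_le_mul_of_nonneg_left _ hznn
        exact mul_le_mul_of_nonneg_left hexp hDpos.le
    _ = Real.exp (Kc α) * z ^ (α+1) * Dfn α k z := by ring

lemma c4_le_sig (α x₁ : ℝ) : c4 α x₁ ≤ sig α x₁ / 4 := by rw [c4]; exact min_le_left _ _
lemma c4_le_del (α x₁ : ℝ) :
    c4 α x₁ ≤ ((1 + del2 α x₁) ^ (α/(α+1)) - 1) / K1 α x₁ := by
  rw [c4]; exact (min_le_right _ _).trans (min_le_left _ _)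
lemma c4_le_lam (α x₁ : ℝ) : c4 α x₁ ≤ (lam α x₁) ^ (α/(α+1)) - 1 := by
  rw [c4]; exact (min_le_right _ _).trans (min_le_right _ _)

lemma exc (hα : 0 < α) (hx₁ : x₁ ∈ Set.Ioo (0:ℝ) 1) (hfix : x₁ * (1 + x₁ ^ α) = 1)
    (k : ℕ) (hk : 1 ≤ k) {z : ℝ} (hz01 : z ∈ Set.Icc (0:ℝ) 1)
    (hlow : ∀ j, j < k → (MP α)^[j] z ≤ x₁) (hexit : x₁ < (MP α)^[k] z) :
    (1 + c4 α x₁ * k) ^ (1/α + 1) ≤ Dfn α k z := by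
  have hc4pos := c4_pos hα hx₁
  have hx₁0 := hx₁.1
  have hzpos : 0 < z := by
    rcases eq_or_lt_of_le hz01.1 with h | h
    · exfalso
      have hsmall : z ≤ x₁ * (1/2) ^ k := by rw [← h]; positivity
      exact absurd hexit (not_lt.mpr (small_orbit hα hx₁ hfix k z hz01.1 hsmall))
    · exact h
  obtain ⟨k', rfl⟩ : ∃ k', k = k' + 1 := ⟨k - 1, by omega⟩
  -- bound via the last factor
  have hyk' : 0 < (MP α)^[k'] z :=
    iter_pos_low hα hx₁ hfix hzpos (k'+1) hlow k' (by omega)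
  have hyk'x : (MP α)^[k'] z ≤ x₁ := hlow k' (by omega)
  have hyk_eq : (MP α)^[k'+1] z = (MP α)^[k'] z * (1 + ((MP α)^[k'] z) ^ α) := by
    rw [Function.iterate_succ_apply', (MP_low hα hx₁ hfix hyk'.le hyk'x).1]
  have hya1 : ((MP α)^[k'] z) ^ α ≤ 1 :=
    Real.rpow_le_one hyk'.le (hyk'x.trans hx₁.2.le) hα.le
  have h2y : x₁ / 2 ≤ (MP α)^[k'] z := by
    rw [hyk_eq] at hexit
    nlinarith
  have hlast : 1 + del2 α x₁ ≤ 1 + (α+1) * ((MP α)^[k'] z) ^ α := by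
    have h := Real.rpow_le_rpow (by linarith : (0:ℝ) ≤ x₁/2) h2y hα.le
    unfold del2
    nlinarith
  have hDk : 1 + del2 α x₁ ≤ Dfn α (k'+1) z := by
    rw [Dfn, Finset.prod_range_succ, ← Dfn]
    have h1 := Dfn_one_le hα hz01 k'
    nlinarith [del2_pos hα hx₁]
  rcases le_or_gt (k'+1) (K1 α x₁) with hsmall | hbig
  · -- short excursion
    have hBnn : 0 ≤ (1 + del2 α x₁) ^ (α/(α+1)) - 1 := by
      have := del2_pos hα hx₁
      have h2 : (1:ℝ) ≤ (1 + del2 α x₁) ^ (α/(α+1)) :=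
        Real.one_le_rpow (by linarith) (by positivity)
      linarith
    have hK1pos : (0:ℝ) < K1 α x₁ := by exact_mod_cast K1_pos α x₁
    have hkK : ((k'+1:ℕ):ℝ) ≤ ((K1 α x₁ : ℕ):ℝ) := by exact_mod_cast hsmall
    have hc4k : c4 α x₁ * ((k'+1:ℕ):ℝ) ≤ (1 + del2 α x₁) ^ (α/(α+1)) - 1 := by
      have h1 := c4_le_del α x₁
      calc c4 α x₁ * ((k'+1:ℕ):ℝ)
          ≤ (((1 + del2 α x₁) ^ (α/(α+1)) - 1) / K1 α x₁) * ((k'+1:ℕ):ℝ) := by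
            apply mul_le_mul_of_nonneg_right h1 (by positivity)
        _ ≤ (((1 + del2 α x₁) ^ (α/(α+1)) - 1) / K1 α x₁) * K1 α x₁ := by
            apply mul_le_mul_of_nonneg_left hkK (by positivity)
        _ = (1 + del2 α x₁) ^ (α/(α+1)) - 1 := by field_simp
    have hup : (1 + c4 α x₁ * ((k'+1:ℕ):ℝ)) ^ (1/α+1)
        ≤ ((1 + del2 α x₁) ^ (α/(α+1))) ^ (1/α+1) := by
      apply Real.rpow_le_rpow (by positivity) (by linarith) (beta_nonneg hα)
    rw [rpow_inv_beta hα (by linarith [del2_pos hα hx₁])] at hup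
    exact hup.trans hDk
  · -- long excursion
    have hesc := esc hα hx₁ hfix (k'+1) (by omega) z hzpos hlow
    have hpB := prodB hα hx₁ hfix (k'+1) z hz01 hzpos hlow
    have hccpos := cc_pos hα hx₁
    have hc6pos := c6_pos hα
    have hσpos := sig_pos hα hx₁
    have hz1p : (0:ℝ) < z ^ (α+1) := Real.rpow_pos_of_pos hzpos _
    have hDpos := Dfn_pos hα hz01 (k'+1)
    have hybig : x₁ ^ (α+1) ≤ ((MP α)^[k'+1] z) ^ (α+1) :=
      Real.rpow_le_rpow hx₁.1.le hexit.le (by positivity)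
    have hD : cc α x₁ * (z ^ (α+1))⁻¹ ≤ Dfn α (k'+1) z := by
      have key : x₁ ^ (α+1) ≤ Real.exp (Kc α) * z ^ (α+1) * Dfn α (k'+1) z :=
        hybig.trans hpB
      have hrw : cc α x₁ * (z ^ (α+1))⁻¹ = x₁ ^ (α+1) / (Real.exp (Kc α) * z ^ (α+1)) := by
        rw [cc, Real.exp_neg]; field_simp
      rw [hrw, div_le_iff₀ (by positivity)]
      nlinarith [key]
    have hzId : (z ^ (α+1))⁻¹ = (z ^ (-α)) ^ (1/α + 1) := by
      rw [← Real.rpow_neg hzpos.le, ← Real.rpow_mul hzpos.le]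
      congr 1
      field_simp
      ring
    have hesc' : 1 + c6 α * (k' : ℝ) ≤ z ^ (-α) := by
      push_cast at hesc
      convert hesc using 2
      ring
    -- numeric inequality
    have hK1cast : ((K1 α x₁ : ℕ):ℝ) + 1 ≤ (k' : ℝ) + 1 := by
      have : (K1 α x₁ : ℕ) + 1 ≤ k' + 1 := hbig
      exact_mod_cast this
    have hceil : 4 / sig α x₁ ≤ (⌈4 / sig α x₁⌉₊ : ℝ) := Nat.le_ceil _
    have hK1eq : ((K1 α x₁ : ℕ):ℝ) = (⌈4 / sig α x₁⌉₊ : ℝ) + 2 := by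
      unfold K1; push_cast; ring
    have hκ4 : 4 / sig α x₁ + 3 ≤ (k' : ℝ) + 1 := by
      rw [hK1eq] at hK1cast; linarith
    have hκ2 : (2:ℝ) ≤ (k' : ℝ) + 1 := by
      have : (0:ℝ) < 4 / sig α x₁ := by positivity
      linarith
    have hccθpos : 0 < (cc α x₁) ^ (α/(α+1)) := Real.rpow_pos_of_pos hccpos _
    have hσκ : 4 ≤ sig α x₁ * ((k' : ℝ) + 1) := by
      have h4 : 4 / sig α x₁ ≤ (k' : ℝ) + 1 := by linarith
      rw [div_le_iff₀ hσpos] at h4; linarith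
    have hnum : 1 + c4 α x₁ * ((k' : ℝ) + 1)
        ≤ (cc α x₁) ^ (α/(α+1)) * (1 + c6 α * (k' : ℝ)) := by
      have hv : 1 + c6 α * (k' : ℝ) = 1 + c6 α * (((k' : ℝ) + 1) - 1) := by ring
      rw [hv]
      exact arith1 hccθpos hc6pos (by rw [sig]) (c4_le_sig α x₁) hc4pos.le hκ2 hσκ
    -- final chain
    have hknn : (0:ℝ) ≤ (k' : ℝ) := Nat.cast_nonneg _
    have hbase : (0:ℝ) ≤ 1 + c4 α x₁ * ((k' : ℝ) + 1) := by positivity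
    have hcast : ((k' + 1 : ℕ) : ℝ) = (k' : ℝ) + 1 := by push_cast; ring
    rw [hcast]
    calc (1 + c4 α x₁ * ((k' : ℝ) + 1)) ^ (1/α + 1)
        ≤ ((cc α x₁) ^ (α/(α+1)) * (1 + c6 α * (k' : ℝ))) ^ (1/α + 1) :=
          Real.rpow_le_rpow hbase hnum (beta_nonneg hα)
      _ = ((cc α x₁) ^ (α/(α+1))) ^ (1/α + 1) * (1 + c6 α * (k' : ℝ)) ^ (1/α + 1) :=
          Real.mul_rpow hccθpos.le (add_nonneg zero_le_one (mul_nonneg hc6pos.le hknn))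
      _ = cc α x₁ * (1 + c6 α * (k' : ℝ)) ^ (1/α + 1) := by
          rw [rpow_inv_beta hα hccpos.le]
      _ ≤ cc α x₁ * (z ^ (-α)) ^ (1/α + 1) := by
          apply mul_le_mul_of_nonneg_left _ hccpos.le
          exact Real.rpow_le_rpow (add_nonneg zero_le_one (mul_nonneg hc6pos.le hknn))
            hesc' (beta_nonneg hα)
      _ = cc α x₁ * (z ^ (α+1))⁻¹ := by rw [hzId]
      _ ≤ Dfn α (k'+1) z := hD

lemma arith2 {a e x y : ℝ} (he : 0 ≤ e) (hea : e ≤ a) (hx : 0 ≤ x) (hy : 0 ≤ y) :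
    1 + e * (x + y) ≤ (1 + a * x) * (1 + e * y) := by
  nlinarith [mul_nonneg (mul_nonneg (he.trans hea) hx) (mul_nonneg he hy),
    mul_nonneg (sub_nonneg.mpr hea) hx]

lemma arith3 {L e m : ℝ} (he : 0 ≤ e) (hL : 1 + e ≤ L) (hm : 0 ≤ m) :
    1 + e * (m + 1) ≤ L * (1 + e * m) := by
  nlinarith [mul_nonneg (mul_nonneg he he) hm,
    mul_nonneg (sub_nonneg.mpr hL) (add_nonneg zero_le_one (mul_nonneg he hm))]

lemma grow (hα : 0 < α) (hx₁ : x₁ ∈ Set.Ioo (0:ℝ) 1) (hfix : x₁ * (1 + x₁ ^ α) = 1) :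
    ∀ (n : ℕ) (z : ℝ), z ∈ Set.Icc (0:ℝ) 1 → x₁ < (MP α)^[n] z →
    (1 + eps1 α x₁ * n) ^ (1/α + 1) ≤ Dfn α n z := by
  intro n
  induction n using Nat.strong_induction_on with
  | _ n ih =>
  intro z hz01 hgt
  have heps_pos := eps1_pos hα hx₁
  have heps_c4 := eps1_le_c4 α x₁
  have hc4pos := c4_pos hα hx₁
  rcases Nat.eq_zero_or_pos n with rfl | hn
  · norm_num [Dfn]
  rcases le_or_gt z x₁ with hlowz | hhighz
  · -- low start, find the exit time
    classical
    have hex : ∃ m, x₁ < (MP α)^[m] z := ⟨n, hgt⟩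
    have hkspec : x₁ < (MP α)^[Nat.find hex] z := Nat.find_spec hex
    set k := Nat.find hex with hk
    have hk1 : 1 ≤ k := by
      rcases Nat.eq_zero_or_pos k with h0 | h
      · exfalso
        rw [h0] at hkspec
        simp only [Function.iterate_zero_apply] at hkspec
        linarith
      · exact h
    have hkn : k ≤ n := Nat.find_min' hex hgt
    have hlowj : ∀ j, j < k → (MP α)^[j] z ≤ x₁ := fun j hj =>
      not_lt.mp (Nat.find_min hex hj)
    have hexc := exc hα hx₁ hfix k hk1 hz01 hlowj hkspec
    have hsplit : Dfn α n z = Dfn α k z * Dfn α (n - k) ((MP α)^[k] z) := by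
      rw [← Dfn_add]
      congr 1
      omega
    have hz' : (MP α)^[k] z ∈ Set.Icc (0:ℝ) 1 := iter_mem hα hz01 k
    have hgt' : x₁ < (MP α)^[n - k] ((MP α)^[k] z) := by
      rw [← Function.iterate_add_apply, show n - k + k = n by omega]
      exact hgt
    have hIH := ih (n - k) (by omega) ((MP α)^[k] z) hz' hgt'
    have hkr : (0:ℝ) ≤ (k:ℝ) := Nat.cast_nonneg _
    have hnkr : (0:ℝ) ≤ ((n-k:ℕ):ℝ) := Nat.cast_nonneg _
    have hnum : 1 + eps1 α x₁ * (n:ℝ)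
        ≤ (1 + c4 α x₁ * (k:ℝ)) * (1 + eps1 α x₁ * ((n-k:ℕ):ℝ)) := by
      have hncast : (n:ℝ) = (k:ℝ) + ((n-k:ℕ):ℝ) := by
        have : k + (n - k) = n := by omega
        exact_mod_cast (congrArg (Nat.cast (R := ℝ)) this).symm
      rw [hncast]
      exact arith2 heps_pos.le heps_c4 hkr hnkr
    have hb1 : (0:ℝ) ≤ 1 + c4 α x₁ * (k:ℝ) := by positivity
    have hb2 : (0:ℝ) ≤ (1 + eps1 α x₁ * ((n-k:ℕ):ℝ)) ^ (1/α + 1) :=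
      Real.rpow_nonneg (by positivity) _
    calc (1 + eps1 α x₁ * (n:ℝ)) ^ (1/α + 1)
        ≤ ((1 + c4 α x₁ * (k:ℝ)) * (1 + eps1 α x₁ * ((n-k:ℕ):ℝ))) ^ (1/α + 1) :=
          Real.rpow_le_rpow (by positivity) hnum (beta_nonneg hα)
      _ = (1 + c4 α x₁ * (k:ℝ)) ^ (1/α + 1) * (1 + eps1 α x₁ * ((n-k:ℕ):ℝ)) ^ (1/α + 1) :=
          Real.mul_rpow hb1 (by positivity)
      _ ≤ Dfn α k z * Dfn α (n - k) ((MP α)^[k] z) :=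
          mul_le_mul hexc hIH hb2 (Dfn_pos hα hz01 k).le
      _ = Dfn α n z := hsplit.symm
  · -- high start
    obtain ⟨m, rfl⟩ : ∃ m, n = m + 1 := ⟨n-1, by omega⟩
    have hlam1 := lam_gt_one hα hx₁
    have hlamle : lam α x₁ ≤ 1 + (α+1) * z ^ α := by
      rw [lam]
      have := Real.rpow_le_rpow hx₁.1.le hhighz.le hα.le
      nlinarith
    have hgt' : x₁ < (MP α)^[m] (MP α z) := by
      rw [← Function.iterate_succ_apply]
      exact hgt
    have hIH := ih m (by omega) (MP α z) (MP_mem hα hz01) hgt'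
    have hLth : 1 + eps1 α x₁ ≤ (lam α x₁) ^ (α/(α+1)) := by
      have h1 := c4_le_lam α x₁
      linarith [heps_c4]
    have hmr : (0:ℝ) ≤ (m:ℝ) := Nat.cast_nonneg _
    have hLpos : (0:ℝ) < (lam α x₁) ^ (α/(α+1)) :=
      Real.rpow_pos_of_pos (by linarith) _
    have hnum : 1 + eps1 α x₁ * ((m+1:ℕ):ℝ)
        ≤ (lam α x₁) ^ (α/(α+1)) * (1 + eps1 α x₁ * (m:ℝ)) := by
      have hcast : ((m+1:ℕ):ℝ) = (m:ℝ) + 1 := by push_cast; ring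
      rw [hcast]
      exact arith3 heps_pos.le hLth hmr
    calc (1 + eps1 α x₁ * ((m+1:ℕ):ℝ)) ^ (1/α + 1)
        ≤ ((lam α x₁) ^ (α/(α+1)) * (1 + eps1 α x₁ * (m:ℝ))) ^ (1/α + 1) :=
          Real.rpow_le_rpow (by positivity) hnum (beta_nonneg hα)
      _ = ((lam α x₁) ^ (α/(α+1))) ^ (1/α + 1) * (1 + eps1 α x₁ * (m:ℝ)) ^ (1/α + 1) :=
          Real.mul_rpow hLpos.le (by positivity)
      _ = lam α x₁ * (1 + eps1 α x₁ * (m:ℝ)) ^ (1/α + 1) := by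
          rw [rpow_inv_beta hα (by linarith : (0:ℝ) ≤ lam α x₁)]
      _ ≤ (1 + (α+1) * z ^ α) * Dfn α m (MP α z) :=
          mul_le_mul hlamle hIH (Real.rpow_nonneg (by positivity) _) (by nlinarith)
      _ = Dfn α (m+1) z := (Dfn_succ' m z).symm

lemma pair_dist (hα : 0 < α) (hx₁ : x₁ ∈ Set.Ioo (0:ℝ) 1) (hfix : x₁ * (1 + x₁ ^ α) = 1)
    {n : ℕ} {z w : ℝ} (h : Hyp α x₁ n z w) :
    w - z ≤ (1 - x₁) / (1 + eps1 α x₁ * n) ^ (1/α + 1) := by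
  have hzw := h.1
  obtain ⟨hz0, hz1, hzgt⟩ := h.2 z le_rfl hzw
  obtain ⟨hw0, hw1, hwgt⟩ := h.2 w hzw le_rfl
  have hexp := expand hα hx₁ hfix n z w h
  have hgrow := grow hα hx₁ hfix n z ⟨hz0, hz1⟩ hzgt
  have hfnw : (MP α)^[n] w ≤ 1 := (iter_mem hα ⟨hw0, hw1⟩ n).2
  have hub : (MP α)^[n] w - (MP α)^[n] z ≤ 1 - x₁ := by linarith
  have hBpos : (0:ℝ) < (1 + eps1 α x₁ * n) ^ (1/α + 1) := by
    apply Real.rpow_pos_of_pos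
    have := eps1_pos hα hx₁
    positivity
  rw [le_div_iff₀ hBpos]
  have h1 : (1 + eps1 α x₁ * n) ^ (1/α + 1) * (w - z) ≤ Dfn α n z * (w - z) :=
    mul_le_mul_of_nonneg_right hgrow (by linarith)
  linarith

lemma Dfn_mono (hα : 0 < α) (hx₁ : x₁ ∈ Set.Ioo (0:ℝ) 1) (hfix : x₁ * (1 + x₁ ^ α) = 1)
    {n : ℕ} {z w : ℝ} (h : Hyp α x₁ n z w) : Dfn α n z ≤ Dfn α n w := by
  have hz01 : z ∈ Set.Icc (0:ℝ) 1 := by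
    obtain ⟨h0, h1, -⟩ := h.2 z le_rfl h.1; exact ⟨h0, h1⟩
  rw [Dfn, Dfn]
  apply Finset.prod_le_prod
  · intro j hj
    have := Dfn_factor_one_le hα (iter_mem hα hz01 j).1
    linarith
  · intro j hj
    rw [Finset.mem_range] at hj
    have hle : (MP α)^[j] z ≤ (MP α)^[j] w := (Hyp_iter hα hx₁ hfix h j hj.le).1
    have hmono := Real.rpow_le_rpow (iter_mem hα hz01 j).1 hle hα.le
    nlinarith

lemma pow_diff_alpha_ge (hα : 0 < α) (hα1 : 1 ≤ α) {z w : ℝ}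
    (hz : 0 ≤ z) (hzw : z ≤ w) (hw1 : w ≤ 1) : w ^ α - z ^ α ≤ α * (w - z) := by
  rcases eq_or_lt_of_le (hz.trans hzw) with h | h
  · have hz0 : z = 0 := le_antisymm (h ▸ hzw) hz
    rw [hz0, ← h]
    simp
  · have htan := rpow_tangent hα1 h hz
    have hw1' : w ^ (α - 1) ≤ 1 := Real.rpow_le_one h.le hw1 (by linarith)
    have hwnn : 0 ≤ w ^ (α - 1) := Real.rpow_nonneg h.le _
    nlinarith [htan, mul_nonneg (sub_nonneg.mpr hzw) (sub_nonneg.mpr hw1')]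

lemma pow_diff_alpha_le (hα : 0 < α) (hα1 : α ≤ 1) {z w : ℝ}
    (hz : 0 ≤ z) (hzw : z ≤ w) : w ^ α - z ^ α ≤ (w - z) ^ α := by
  have h := NNReal.rpow_add_le_add_rpow (Real.toNNReal z) (Real.toNNReal (w - z)) hα.le hα1
  have hzz : Real.toNNReal z + Real.toNNReal (w - z) = Real.toNNReal w := by
    rw [← Real.toNNReal_add hz (by linarith)]
    congr 1
    ring
  rw [hzz] at h
  have h2 := NNReal.coe_le_coe.mpr h
  rw [NNReal.coe_add] at h2
  rw [NNReal.coe_rpow, NNReal.coe_rpow, NNReal.coe_rpow] at h2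
  rw [Real.coe_toNNReal _ (hz.trans hzw), Real.coe_toNNReal _ hz,
    Real.coe_toNNReal _ (by linarith : (0:ℝ) ≤ w - z)] at h2
  linarith

lemma rpow_neg_antitone {a b s : ℝ} (ha : 0 < a) (hab : a ≤ b) (hs : 0 ≤ s) :
    b ^ (-s) ≤ a ^ (-s) := by
  rw [Real.rpow_neg (ha.le.trans hab), Real.rpow_neg ha.le]
  have h1 : 0 < a ^ s := Real.rpow_pos_of_pos ha s
  have h2 : a ^ s ≤ b ^ s := Real.rpow_le_rpow ha.le hab hs
  exact inv_anti₀ h1 h2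

noncomputable def rho (α : ℝ) : ℝ := 1 + min α α⁻¹
noncomputable def TT (α : ℝ) : ℝ := ∑' i : ℕ, ((i:ℝ) + 1) ^ (-(rho α))
noncomputable def AA (α x₁ : ℝ) : ℝ := (max α 1) * (eps1 α x₁) ^ (-(1/α + 1))
noncomputable def CC (α x₁ : ℝ) : ℝ := Real.exp ((α+1) * (AA α x₁ * TT α))

lemma rho_gt_one (hα : 0 < α) : 1 < rho α := by
  rw [rho]
  have h1 : 0 < α⁻¹ := by positivity
  rcases le_total α α⁻¹ with h | h
  · rw [min_eq_left h]; linarith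
  · rw [min_eq_right h]; linarith

lemma rho_le_beta (hα : 0 < α) : rho α ≤ 1/α + 1 := by
  rw [rho, one_div]
  have : min α α⁻¹ ≤ α⁻¹ := min_le_right _ _
  linarith

lemma TT_summable (hα : 0 < α) : Summable (fun i : ℕ => ((i:ℝ) + 1) ^ (-(rho α))) := by
  have h1 := rho_gt_one hα
  have h2 : Summable (fun n : ℕ => (n:ℝ) ^ (-(rho α))) :=
    (Real.summable_nat_rpow (p := -(rho α))).mpr (by linarith)
  have h3 := (summable_nat_add_iff (f := fun n : ℕ => (n:ℝ) ^ (-(rho α))) 1).mpr h2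
  convert h3 using 2 with i
  push_cast
  exact rfl
  push_cast
  rfl

lemma sum_pow_le_TT (hα : 0 < α) (n : ℕ) :
    ∑ j ∈ Finset.range n, ((j:ℝ) + 1) ^ (-(rho α)) ≤ TT α := by
  rw [TT]
  apply Summable.sum_le_tsum
  · intro i _
    exact Real.rpow_nonneg (by positivity) _
  · exact TT_summable hα

lemma TT_nonneg (hα : 0 < α) : 0 ≤ TT α := by
  have := sum_pow_le_TT hα 0
  simpa using this

lemma AA_nonneg (hα : 0 < α) (hx₁ : x₁ ∈ Set.Ioo (0:ℝ) 1) : 0 ≤ AA α x₁ := by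
  rw [AA]
  have h1 : (0:ℝ) ≤ max α 1 := le_trans zero_le_one (le_max_right _ _)
  have h2 : (0:ℝ) ≤ (eps1 α x₁) ^ (-(1/α + 1)) :=
    Real.rpow_nonneg (eps1_pos hα hx₁).le _
  positivity

lemma CC_one_le (hα : 0 < α) (hx₁ : x₁ ∈ Set.Ioo (0:ℝ) 1) : 1 ≤ CC α x₁ := by
  rw [CC, ← Real.exp_zero]
  apply Real.exp_le_exp.mpr
  have := AA_nonneg hα hx₁
  have := TT_nonneg hα
  positivity

lemma eps1_le_half (α x₁ : ℝ) : eps1 α x₁ ≤ 1/2 := by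
  rw [eps1]; exact min_le_right _ _

lemma dj_bound (hα : 0 < α) (hx₁ : x₁ ∈ Set.Ioo (0:ℝ) 1) (hfix : x₁ * (1 + x₁ ^ α) = 1)
    {n : ℕ} {z w : ℝ} (h : Hyp α x₁ n z w) {j : ℕ} (hj : j < n) :
    ((MP α)^[j] w) ^ α - ((MP α)^[j] z) ^ α
      ≤ AA α x₁ * ((n - j : ℕ):ℝ) ^ (-(rho α)) := by
  have hH := Hyp_iter hα hx₁ hfix h j hj.le
  obtain ⟨hu0, hu1, -⟩ := hH.2 _ le_rfl hH.1
  obtain ⟨hv0, hv1, -⟩ := hH.2 _ hH.1 le_rfl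
  have hd := pair_dist hα hx₁ hfix hH
  have hε := eps1_pos hα hx₁
  have hε12 := eps1_le_half α x₁
  have hmpos : (0:ℝ) < ((n - j : ℕ):ℝ) := by
    have : 0 < n - j := by omega
    exact_mod_cast this
  have hbase : (0:ℝ) < eps1 α x₁ * ((n - j : ℕ):ℝ) := by positivity
  have hBpos : (0:ℝ) < (1 + eps1 α x₁ * ((n - j : ℕ):ℝ)) ^ (1/α + 1) :=
    Real.rpow_pos_of_pos (by positivity) _
  have hstep1 : (1 - x₁) / (1 + eps1 α x₁ * ((n - j : ℕ):ℝ)) ^ (1/α + 1)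
      ≤ (1 + eps1 α x₁ * ((n - j : ℕ):ℝ)) ^ (-(1/α + 1)) := by
    rw [Real.rpow_neg (by positivity), inv_eq_one_div]
    gcongr
    linarith [hx₁.1]
  have hstep2 : (1 + eps1 α x₁ * ((n - j : ℕ):ℝ)) ^ (-(1/α + 1))
      ≤ (eps1 α x₁ * ((n - j : ℕ):ℝ)) ^ (-(1/α + 1)) :=
    rpow_neg_antitone hbase (by linarith) (beta_nonneg hα)
  have hd2 : (MP α)^[j] w - (MP α)^[j] z
      ≤ (eps1 α x₁ * ((n - j : ℕ):ℝ)) ^ (-(1/α + 1)) :=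
    hd.trans (hstep1.trans hstep2)
  have hsplitpow : (eps1 α x₁ * ((n - j : ℕ):ℝ)) ^ (-(1/α + 1))
      = (eps1 α x₁) ^ (-(1/α + 1)) * ((n - j : ℕ):ℝ) ^ (-(1/α + 1)) :=
    Real.mul_rpow hε.le hmpos.le
  have hεβnn : (0:ℝ) ≤ (eps1 α x₁) ^ (-(1/α + 1)) := Real.rpow_nonneg hε.le _
  have hmβnn : (0:ℝ) ≤ ((n - j : ℕ):ℝ) ^ (-(1/α + 1)) := Real.rpow_nonneg hmpos.le _
  have hmρnn : (0:ℝ) ≤ ((n - j : ℕ):ℝ) ^ (-(rho α)) := Real.rpow_nonneg hmpos.le _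
  rcases le_total 1 α with hge | hle
  · -- α ≥ 1
    have hrho : rho α = 1/α + 1 := by
      have hinv : α⁻¹ ≤ α := by
        calc α⁻¹ ≤ 1 := by rw [inv_le_one_iff₀]; right; exact hge
          _ ≤ α := hge
      rw [rho, min_eq_right hinv, one_div]
      ring
    have hdiff := pow_diff_alpha_ge hα hge hu0 hH.1 hv1
    have e1 : ((MP α)^[j] w) ^ α - ((MP α)^[j] z) ^ α
        ≤ α * ((eps1 α x₁) ^ (-(1/α + 1)) * ((n - j : ℕ):ℝ) ^ (-(1/α + 1))) := by
      rw [← hsplitpow]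
      exact hdiff.trans (mul_le_mul_of_nonneg_left hd2 hα.le)
    rw [AA, hrho]
    have hαmax : α ≤ max α 1 := le_max_left _ _
    calc ((MP α)^[j] w) ^ α - ((MP α)^[j] z) ^ α
        ≤ α * ((eps1 α x₁) ^ (-(1/α + 1)) * ((n - j : ℕ):ℝ) ^ (-(1/α + 1))) := e1
      _ ≤ max α 1 * ((eps1 α x₁) ^ (-(1/α + 1)) * ((n - j : ℕ):ℝ) ^ (-(1/α + 1))) :=
          mul_le_mul_of_nonneg_right hαmax (mul_nonneg hεβnn hmβnn)
      _ = max α 1 * (eps1 α x₁) ^ (-(1/α + 1)) * ((n - j : ℕ):ℝ) ^ (-(1/α + 1)) := by ring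
  · -- α ≤ 1
    have hα2 : α ≤ α⁻¹ := by
      rw [inv_eq_one_div, le_div_iff₀ hα]
      nlinarith
    have hrho : rho α = 1 + α := by rw [rho, min_eq_left hα2]
    have hdiff := pow_diff_alpha_le hα hle hu0 hH.1
    have hvu0 : (0:ℝ) ≤ (MP α)^[j] w - (MP α)^[j] z := by linarith [hH.1]
    have e1 : ((MP α)^[j] w - (MP α)^[j] z) ^ α
        ≤ ((eps1 α x₁ * ((n - j : ℕ):ℝ)) ^ (-(1/α + 1))) ^ α :=
      Real.rpow_le_rpow hvu0 hd2 hα.le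
    have e2 : ((eps1 α x₁ * ((n - j : ℕ):ℝ)) ^ (-(1/α + 1))) ^ α
        = (eps1 α x₁ * ((n - j : ℕ):ℝ)) ^ (-(1+α)) := by
      have hid : (-(1/α + 1)) * α = -(1+α) := by field_simp
      rw [← Real.rpow_mul hbase.le, hid]
    have e3 : (eps1 α x₁ * ((n - j : ℕ):ℝ)) ^ (-(1+α))
        = (eps1 α x₁) ^ (-(1+α)) * ((n - j : ℕ):ℝ) ^ (-(1+α)) :=
      Real.mul_rpow hε.le hmpos.le
    have e4 : (eps1 α x₁) ^ (-(1+α)) ≤ (eps1 α x₁) ^ (-(1/α + 1)) := by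
      apply Real.rpow_le_rpow_of_exponent_ge hε (by linarith)
      have h1α : 1 ≤ 1/α := by
        rw [le_div_iff₀ hα]
        nlinarith
      linarith
    have hmρ : ((n - j : ℕ):ℝ) ^ (-(1+α)) = ((n - j : ℕ):ℝ) ^ (-(rho α)) := by
      rw [hrho]
    rw [AA]
    have h1max : (1:ℝ) ≤ max α 1 := le_max_right _ _
    have echain : ((MP α)^[j] w) ^ α - ((MP α)^[j] z) ^ α
        ≤ (eps1 α x₁) ^ (-(1+α)) * ((n - j : ℕ):ℝ) ^ (-(rho α)) := by
      calc ((MP α)^[j] w) ^ α - ((MP α)^[j] z) ^ α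
          ≤ ((MP α)^[j] w - (MP α)^[j] z) ^ α := hdiff
        _ ≤ ((eps1 α x₁ * ((n - j : ℕ):ℝ)) ^ (-(1/α + 1))) ^ α := e1
        _ = (eps1 α x₁) ^ (-(1+α)) * ((n - j : ℕ):ℝ) ^ (-(rho α)) := by
            rw [e2, e3, hmρ]
    calc ((MP α)^[j] w) ^ α - ((MP α)^[j] z) ^ α
        ≤ (eps1 α x₁) ^ (-(1+α)) * ((n - j : ℕ):ℝ) ^ (-(rho α)) := echain
      _ ≤ (eps1 α x₁) ^ (-(1/α+1)) * ((n - j : ℕ):ℝ) ^ (-(rho α)) :=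
          mul_le_mul_of_nonneg_right e4 hmρnn
      _ ≤ max α 1 * ((eps1 α x₁) ^ (-(1/α + 1)) * ((n - j : ℕ):ℝ) ^ (-(rho α))) :=
          le_mul_of_one_le_left (mul_nonneg hεβnn hmρnn) h1max
      _ = max α 1 * (eps1 α x₁) ^ (-(1/α + 1)) * ((n - j : ℕ):ℝ) ^ (-(rho α)) := by ring

lemma distort (hα : 0 < α) (hx₁ : x₁ ∈ Set.Ioo (0:ℝ) 1) (hfix : x₁ * (1 + x₁ ^ α) = 1)
    {n : ℕ} {z w : ℝ} (h : Hyp α x₁ n z w) :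
    Dfn α n w ≤ CC α x₁ * Dfn α n z := by
  have hz01 : z ∈ Set.Icc (0:ℝ) 1 := by
    obtain ⟨h0, h1, -⟩ := h.2 z le_rfl h.1; exact ⟨h0, h1⟩
  have hw01 : w ∈ Set.Icc (0:ℝ) 1 := by
    obtain ⟨h0, h1, -⟩ := h.2 w h.1 le_rfl; exact ⟨h0, h1⟩
  -- factorwise bound
  have hfac : ∀ j ∈ Finset.range n,
      1 + (α+1) * ((MP α)^[j] w) ^ α
      ≤ (1 + (α+1) * ((MP α)^[j] z) ^ α)
        * Real.exp ((α+1) * (AA α x₁ * ((n - j : ℕ):ℝ) ^ (-(rho α)))) := by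
    intro j hj
    rw [Finset.mem_range] at hj
    have hdj := dj_bound hα hx₁ hfix h hj
    have hfz := Dfn_factor_one_le hα (iter_mem hα hz01 j).1
    have hexp1 : 1 + (α+1) * (AA α x₁ * ((n - j : ℕ):ℝ) ^ (-(rho α)))
        ≤ Real.exp ((α+1) * (AA α x₁ * ((n - j : ℕ):ℝ) ^ (-(rho α)))) := by
      linarith [Real.add_one_le_exp ((α+1) * (AA α x₁ * ((n - j : ℕ):ℝ) ^ (-(rho α))))]
    have hdnn : (0:ℝ) ≤ AA α x₁ * ((n - j : ℕ):ℝ) ^ (-(rho α)) := by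
      have hm0 : (0:ℝ) ≤ ((n - j : ℕ):ℝ) := Nat.cast_nonneg _
      exact mul_nonneg (AA_nonneg hα hx₁) (Real.rpow_nonneg hm0 _)
    have step1 : 1 + (α+1) * ((MP α)^[j] w) ^ α
        ≤ (1 + (α+1) * ((MP α)^[j] z) ^ α)
          * (1 + (α+1) * (AA α x₁ * ((n - j : ℕ):ℝ) ^ (-(rho α)))) := by
      nlinarith [hdj, hfz, hdnn, mul_nonneg (mul_nonneg (by linarith : (0:ℝ) ≤ α+1) hdnn)
        (by linarith : (0:ℝ) ≤ (α+1) * ((MP α)^[j] z) ^ α)]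
    calc 1 + (α+1) * ((MP α)^[j] w) ^ α
        ≤ (1 + (α+1) * ((MP α)^[j] z) ^ α)
          * (1 + (α+1) * (AA α x₁ * ((n - j : ℕ):ℝ) ^ (-(rho α)))) := step1
      _ ≤ (1 + (α+1) * ((MP α)^[j] z) ^ α)
          * Real.exp ((α+1) * (AA α x₁ * ((n - j : ℕ):ℝ) ^ (-(rho α)))) :=
          mul_le_mul_of_nonneg_left hexp1 (by linarith)
  -- product bound
  have hprod : Dfn α n w ≤ Dfn α n z
      * Real.exp (∑ j ∈ Finset.range n, (α+1) * (AA α x₁ * ((n - j : ℕ):ℝ) ^ (-(rho α)))) := by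
    rw [Dfn, Dfn, Real.exp_sum, ← Finset.prod_mul_distrib]
    apply Finset.prod_le_prod
    · intro j hj
      have := Dfn_factor_one_le hα (iter_mem hα hw01 j).1
      linarith
    · exact hfac
  have hsum : ∑ j ∈ Finset.range n, (α+1) * (AA α x₁ * ((n - j : ℕ):ℝ) ^ (-(rho α)))
      ≤ (α+1) * (AA α x₁ * TT α) := by
    have hre : ∑ j ∈ Finset.range n, (α+1) * (AA α x₁ * ((n - j : ℕ):ℝ) ^ (-(rho α)))
        = (α+1) * (AA α x₁ * ∑ j ∈ Finset.range n, ((n - j : ℕ):ℝ) ^ (-(rho α))) := by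
      rw [Finset.mul_sum, Finset.mul_sum]
    rw [hre]
    have hreflect : ∑ j ∈ Finset.range n, ((n - j : ℕ):ℝ) ^ (-(rho α))
        = ∑ j ∈ Finset.range n, ((j:ℝ) + 1) ^ (-(rho α)) := by
      rw [← Finset.sum_range_reflect (fun j => ((j:ℝ) + 1) ^ (-(rho α))) n]
      apply Finset.sum_congr rfl
      intro j hj
      rw [Finset.mem_range] at hj
      congr 2
      have : n - 1 - j + 1 = n - j := by omega
      rw [← this]
      push_cast
      ring
    rw [hreflect]
    have hTT := sum_pow_le_TT hα n
    have hAAnn := AA_nonneg hα hx₁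
    have h1 : AA α x₁ * ∑ j ∈ Finset.range n, ((j:ℝ) + 1) ^ (-(rho α)) ≤ AA α x₁ * TT α :=
      mul_le_mul_of_nonneg_left hTT hAAnn
    exact mul_le_mul_of_nonneg_left h1 (by linarith : (0:ℝ) ≤ α + 1)
  calc Dfn α n w
      ≤ Dfn α n z * Real.exp (∑ j ∈ Finset.range n,
          (α+1) * (AA α x₁ * ((n - j : ℕ):ℝ) ^ (-(rho α)))) := hprod
    _ ≤ Dfn α n z * Real.exp ((α+1) * (AA α x₁ * TT α)) := by
        apply mul_le_mul_of_nonneg_left (Real.exp_le_exp.mpr hsum) (Dfn_pos hα hz01 n).le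
    _ = CC α x₁ * Dfn α n z := by rw [CC]; ring

end MP5

theorem stmt5 (α : ℝ) (hα : 0 < α) (x₁ : ℝ) (hx₁ : x₁ ∈ Set.Ioo (0:ℝ) 1)
    (hfix : x₁ * (1 + x₁ ^ α) = 1) :
    ∃ ε₁ ∈ Set.Ioo (0:ℝ) 1, ∃ C₁ > (1:ℝ),
      ∀ n : ℕ, 1 ≤ n → ∀ J : Set ℝ,
        J.Nonempty → IsPreconnected J →
        J ⊆ {z | z ∈ Set.Icc (0:ℝ) 1 ∧ (MP α)^[n] z ∈ Set.Ioc x₁ 1} →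
        (∀ J' : Set ℝ, IsPreconnected J' → J ⊆ J' →
          J' ⊆ {z | z ∈ Set.Icc (0:ℝ) 1 ∧ (MP α)^[n] z ∈ Set.Ioc x₁ 1} → J' = J) →
        Metric.diam J ≤ (1 - x₁) / (1 + ε₁ * n) ^ (1/α + 1) ∧
        (∀ z ∈ J, (1 + ε₁ * n) ^ (1/α + 1) ≤ Dfn α n z) ∧
        (∀ z ∈ J, ∀ w ∈ J, C₁⁻¹ ≤ Dfn α n z / Dfn α n w ∧ Dfn α n z / Dfn α n w ≤ C₁) := by
  have hCC := MP5.CC_one_le hα hx₁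
  refine ⟨MP5.eps1 α x₁, ⟨MP5.eps1_pos hα hx₁, MP5.eps1_lt_one hα hx₁⟩,
    MP5.CC α x₁ + 1, by linarith, ?_⟩
  intro n hn J hJne hJpc hJsub hJmax
  have hpair : ∀ z ∈ J, ∀ w ∈ J, z ≤ w → MP5.Hyp α x₁ n z w := by
    intro z hz w hw hzw
    refine ⟨hzw, fun t ht1 ht2 => ?_⟩
    have htJ : t ∈ J := hJpc.ordConnected.out hz hw ⟨ht1, ht2⟩
    obtain ⟨⟨h0, h1⟩, h2⟩ := hJsub htJ
    exact ⟨h0, h1, h2.1⟩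
  have hBpos : (0:ℝ) < (1 + MP5.eps1 α x₁ * n) ^ (1/α + 1) := by
    apply Real.rpow_pos_of_pos
    have := MP5.eps1_pos hα hx₁
    positivity
  have hbnn : (0:ℝ) ≤ (1 - x₁) / (1 + MP5.eps1 α x₁ * n) ^ (1/α + 1) := by
    apply div_nonneg (by linarith [hx₁.2]) hBpos.le
  refine ⟨?_, ?_, ?_⟩
  · -- (a) diameter bound
    apply Metric.diam_le_of_forall_dist_le hbnn
    intro z hz w hw
    rcases le_total z w with hzw | hwz
    · have hb := MP5.pair_dist hα hx₁ hfix (hpair z hz w hw hzw)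
      rw [Real.dist_eq, abs_le]
      constructor <;> linarith
    · have hb := MP5.pair_dist hα hx₁ hfix (hpair w hw z hz hwz)
      rw [Real.dist_eq, abs_le]
      constructor <;> linarith
  · -- (b) derivative growth
    intro z hz
    obtain ⟨⟨h0, h1⟩, h2⟩ := hJsub hz
    exact MP5.grow hα hx₁ hfix n z ⟨h0, h1⟩ h2.1
  · -- (c) distortion
    intro z hz w hw
    obtain ⟨hz01, -⟩ := hJsub hz
    obtain ⟨hw01, -⟩ := hJsub hw
    have hDz : 0 < Dfn α n z := MP5.Dfn_pos hα hz01 n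
    have hDw : 0 < Dfn α n w := MP5.Dfn_pos hα hw01 n
    have hC1 : (1:ℝ) ≤ MP5.CC α x₁ + 1 := by linarith
    have hC1pos : (0:ℝ) < MP5.CC α x₁ + 1 := by linarith
    rcases le_total z w with hzw | hwz
    · have hH := hpair z hz w hw hzw
      have h1 : Dfn α n z ≤ Dfn α n w := MP5.Dfn_mono hα hx₁ hfix hH
      have h2 : Dfn α n w ≤ MP5.CC α x₁ * Dfn α n z := MP5.distort hα hx₁ hfix hH
      constructor
      · rw [le_div_iff₀ hDw]
        calc (MP5.CC α x₁ + 1)⁻¹ * Dfn α n w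
            ≤ (MP5.CC α x₁ + 1)⁻¹ * ((MP5.CC α x₁ + 1) * Dfn α n z) := by
              apply mul_le_mul_of_nonneg_left _ (by positivity)
              nlinarith
          _ = Dfn α n z := by field_simp
      · rw [div_le_iff₀ hDw]
        nlinarith
    · have hH := hpair w hw z hz hwz
      have h1 : Dfn α n w ≤ Dfn α n z := MP5.Dfn_mono hα hx₁ hfix hH
      have h2 : Dfn α n z ≤ MP5.CC α x₁ * Dfn α n w := MP5.distort hα hx₁ hfix hH
      constructor
      · rw [le_div_iff₀ hDw]
        calc (MP5.CC α x₁ + 1)⁻¹ * Dfn α n w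
            ≤ 1 * Dfn α n w := by
              apply mul_le_mul_of_nonneg_right _ hDw.le
              rw [inv_le_one_iff₀]
              right; exact hC1
          _ = Dfn α n w := by ring
          _ ≤ Dfn α n z := h1
      · rw [div_le_iff₀ hDw]
        nlinarith
end

section
/- Let γ > 0 and let φ : [0,1] → ℝ be continuous with continuous derivative on (0,1]. Then the limit c = lim_{x→0⁺} φ'(x)/(γ x^{γ−1}) exists in ℝ if and only if there exist c ∈ ℝ and a function h, continuous on [0,1] and continuously differentiable on (0,1], such that φ(x) = φ(0) + c x^γ + h(x) x^γ for all x ∈ [0,1], h(0) = 0, and lim_{x→0⁺} h'(x)x = 0. Moreover in that case c and h are unique and c = lim_{x→0⁺} φ'(x)/(γ x^{γ−1}). -/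
open Real Set Filter Topology

lemma forward_aux (γ : ℝ) (hγ : 0 < γ) (φ φ' : ℝ → ℝ)
    (hφ : ContinuousOn φ (Set.Icc 0 1))
    (hd : ∀ z ∈ Set.Ioc (0:ℝ) 1, HasDerivAt φ (φ' z) z)
    (hd' : ContinuousOn φ' (Set.Ioc 0 1))
    (c : ℝ)
    (hdiv : Filter.Tendsto (fun z => φ' z / (γ * z ^ (γ - 1)))
        (nhdsWithin 0 (Set.Ioi 0)) (nhds c)) :
    (∃ h h' : ℝ → ℝ,
        ContinuousOn h (Set.Icc 0 1) ∧
        (∀ z ∈ Set.Ioc (0:ℝ) 1, HasDerivAt h (h' z) z) ∧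
        ContinuousOn h' (Set.Ioc 0 1) ∧
        (∀ z ∈ Set.Icc (0:ℝ) 1, φ z = φ 0 + c * z ^ γ + h z * z ^ γ) ∧
        h 0 = 0 ∧
        Filter.Tendsto (fun z => h' z * z) (nhdsWithin 0 (Set.Ioi 0)) (nhds 0)) := by
  set h : ℝ → ℝ := fun z => (φ z - φ 0 - c * z ^ γ) / z ^ γ with hhdef
  set h' : ℝ → ℝ := fun z =>
    ((φ' z - c * (γ * z ^ (γ - 1))) * z ^ γ
      - (φ z - φ 0 - c * z ^ γ) * (γ * z ^ (γ - 1))) / (z ^ γ) ^ 2 with hh'def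
  have hh0 : h 0 = 0 := by
    simp [hhdef, Real.zero_rpow hγ.ne']
  -- basic facts
  have hqpos : ∀ z : ℝ, 0 < z → (0:ℝ) < z ^ γ := fun z hz => Real.rpow_pos_of_pos hz _
  have hppos : ∀ z : ℝ, 0 < z → (0:ℝ) < z ^ (γ - 1) := fun z hz => Real.rpow_pos_of_pos hz _
  -- L'Hopital
  have hfa : Filter.Tendsto (fun z => φ z - φ 0) (𝓝[>] (0:ℝ)) (𝓝 0) := by
    have := (hφ 0 ⟨le_refl 0, zero_le_one⟩).tendsto
    have hle : 𝓝[>] (0:ℝ) ≤ 𝓝[Set.Icc (0:ℝ) 1] 0 := by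
      rw [← nhdsWithin_Ioc_eq_nhdsGT (zero_lt_one (α := ℝ))]
      exact nhdsWithin_mono _ Ioc_subset_Icc_self
    simpa using (this.mono_left hle).sub_const (φ 0)
  have hga : Filter.Tendsto (fun z : ℝ => z ^ γ) (𝓝[>] (0:ℝ)) (𝓝 0) := by
    have := (Real.continuousAt_rpow_const 0 γ (Or.inr hγ.le)).tendsto
    rw [Real.zero_rpow hγ.ne'] at this
    exact this.mono_left nhdsWithin_le_nhds
  have L2 : Filter.Tendsto (fun z => (φ z - φ 0) / z ^ γ) (𝓝[>] (0:ℝ)) (𝓝 c) := by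
    refine HasDerivAt.lhopital_zero_right_on_Ioo zero_lt_one
      (f' := φ') (g' := fun z => γ * z ^ (γ - 1)) ?_ ?_ ?_ hfa hga hdiv
    · exact fun x hx => (hd x ⟨hx.1, hx.2.le⟩).sub_const (φ 0)
    · exact fun x hx => Real.hasDerivAt_rpow_const (Or.inl hx.1.ne')
    · exact fun x hx => (mul_pos hγ (Real.rpow_pos_of_pos hx.1 _)).ne'
  have hIoo : Set.Ioo (0:ℝ) 1 ∈ 𝓝[>] (0:ℝ) := Ioo_mem_nhdsGT one_pos
  -- h tends to 0 at 0+
  have hhlim : Filter.Tendsto h (𝓝[>] (0:ℝ)) (𝓝 0) := by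
    have := L2.sub_const c
    rw [sub_self] at this
    refine this.congr' ?_
    filter_upwards [self_mem_nhdsWithin] with z (hz : (0:ℝ) < z)
    have hq := (hqpos z hz).ne'
    simp only [hhdef]
    field_simp
  -- continuity of h on Icc
  have hrpowcont : ContinuousOn (fun z : ℝ => z ^ γ) (Set.Ioc 0 1) :=
    fun z hz => (Real.continuousAt_rpow_const z γ (Or.inl hz.1.ne')).continuousWithinAt
  have hhIoc : ContinuousOn h (Set.Ioc 0 1) := by
    refine ContinuousOn.div ?_ hrpowcont fun z hz => (hqpos z hz.1).ne'
    exact ((hφ.mono Ioc_subset_Icc_self).sub continuousOn_const).sub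
      (continuousOn_const.mul hrpowcont)
  have hIocmem : ∀ x ∈ Set.Ioc (0:ℝ) 1, Set.Ioc (0:ℝ) 1 ∈ 𝓝[Set.Icc 0 1] x := by
    intro x hx
    rw [mem_nhdsWithin]
    exact ⟨Set.Ioi 0, isOpen_Ioi, hx.1, fun y hy => ⟨hy.1, hy.2.2⟩⟩
  have hhcont : ContinuousOn h (Set.Icc 0 1) := by
    intro x hx
    rcases eq_or_lt_of_le hx.1 with rfl | hx0
    · rw [ContinuousWithinAt, hh0, ← Set.Ioc_insert_left zero_le_one, nhdsWithin_insert,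
        tendsto_sup, nhdsWithin_Ioc_eq_nhdsGT (zero_lt_one (α := ℝ))]
      exact ⟨by simpa [hh0] using tendsto_pure_nhds h 0, hhlim⟩
    · exact (hhIoc x ⟨hx0, hx.2⟩).mono_of_mem_nhdsWithin (hIocmem x ⟨hx0, hx.2⟩)
  -- derivative of h
  have hhd : ∀ z ∈ Set.Ioc (0:ℝ) 1, HasDerivAt h (h' z) z := by
    intro z hz
    have hrp : HasDerivAt (fun x : ℝ => x ^ γ) (γ * z ^ (γ - 1)) z :=
      Real.hasDerivAt_rpow_const (Or.inl hz.1.ne')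
    exact (((hd z hz).sub_const (φ 0)).sub (hrp.const_mul c)).div hrp (hqpos z hz.1).ne'
  -- continuity of h' on Ioc
  have hrpowcont' : ContinuousOn (fun z : ℝ => z ^ (γ - 1)) (Set.Ioc 0 1) :=
    fun z hz => (Real.continuousAt_rpow_const z (γ - 1) (Or.inl hz.1.ne')).continuousWithinAt
  have hh'cont : ContinuousOn h' (Set.Ioc 0 1) := by
    refine ContinuousOn.div ?_ (hrpowcont.pow 2) fun z hz => by
      exact pow_ne_zero _ (hqpos z hz.1).ne'
    exact ((hd'.sub (continuousOn_const.mul (continuousOn_const.mul hrpowcont'))).mul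
        hrpowcont).sub
      ((((hφ.mono Ioc_subset_Icc_self).sub continuousOn_const).sub
        (continuousOn_const.mul hrpowcont)).mul (continuousOn_const.mul hrpowcont'))
  -- the decomposition
  have heq : ∀ z ∈ Set.Icc (0:ℝ) 1, φ z = φ 0 + c * z ^ γ + h z * z ^ γ := by
    intro z hz
    rcases eq_or_lt_of_le hz.1 with rfl | hz0
    · simp [Real.zero_rpow hγ.ne']
    · have hq := (hqpos z hz0).ne'
      simp only [hhdef]
      field_simp
      ring
  -- tendsto h' z * z → 0
  have hh'lim : Filter.Tendsto (fun z => h' z * z) (𝓝[>] (0:ℝ)) (𝓝 0) := by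
    have key := ((hdiv.sub L2).const_mul γ)
    rw [sub_self, mul_zero] at key
    refine key.congr' ?_
    filter_upwards [self_mem_nhdsWithin] with z (hz : (0:ℝ) < z)
    have hp := (hppos z hz).ne'
    have hqq : z ^ γ = z ^ (γ - 1) * z := by
      rw [← Real.rpow_add_one hz.ne' (γ - 1)]; ring_nf
    rw [hh'def]
    simp only
    rw [hqq]
    field_simp
    ring
  exact ⟨h, h', hhcont, hhd, hh'cont, heq, hh0, hh'lim⟩


-- backward: from decomposition, derive the limit and the formula
lemma backward_aux (γ : ℝ) (hγ : 0 < γ) (φ φ' : ℝ → ℝ)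
    (hφ : ContinuousOn φ (Set.Icc 0 1))
    (hd : ∀ z ∈ Set.Ioc (0:ℝ) 1, HasDerivAt φ (φ' z) z)
    (c : ℝ) (h h' : ℝ → ℝ)
    (hh : ContinuousOn h (Set.Icc 0 1))
    (hhd : ∀ z ∈ Set.Ioc (0:ℝ) 1, HasDerivAt h (h' z) z)
    (heq : ∀ z ∈ Set.Icc (0:ℝ) 1, φ z = φ 0 + c * z ^ γ + h z * z ^ γ)
    (hh0 : h 0 = 0)
    (hlim : Filter.Tendsto (fun z => h' z * z) (nhdsWithin 0 (Set.Ioi 0)) (nhds 0)) :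
    Filter.Tendsto (fun z => φ' z / (γ * z ^ (γ - 1)))
        (nhdsWithin 0 (Set.Ioi 0)) (nhds c) ∧
      ∀ z ∈ Set.Icc (0:ℝ) 1, h z = (φ z - φ 0 - c * z ^ γ) / z ^ γ := by
  have hIoo : Set.Ioo (0:ℝ) 1 ∈ 𝓝[>] (0:ℝ) := Ioo_mem_nhdsGT one_pos
  -- derivative identity on Ioo 0 1
  have hderiv : ∀ z ∈ Set.Ioo (0:ℝ) 1,
      φ' z = h' z * z ^ γ + (c + h z) * (γ * z ^ (γ - 1)) := by
    intro z hz
    have hz0 : (0:ℝ) < z := hz.1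
    have hrp : HasDerivAt (fun x : ℝ => x ^ γ) (γ * z ^ (γ - 1)) z :=
      Real.hasDerivAt_rpow_const (Or.inl hz0.ne')
    have hF : HasDerivAt (fun x => φ 0 + c * x ^ γ + h x * x ^ γ)
        (c * (γ * z ^ (γ - 1)) + (h' z * z ^ γ + h z * (γ * z ^ (γ - 1)))) z := by
      exact ((hrp.const_mul c).const_add (φ 0)).add
        ((hhd z ⟨hz.1, hz.2.le⟩).mul hrp)
    have hev : φ =ᶠ[𝓝 z] fun x => φ 0 + c * x ^ γ + h x * x ^ γ := by
      filter_upwards [Ioo_mem_nhds hz.1 hz.2] with x hx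
      exact heq x ⟨hx.1.le, hx.2.le⟩
    have h2 : HasDerivAt φ (c * (γ * z ^ (γ - 1)) + (h' z * z ^ γ + h z * (γ * z ^ (γ - 1)))) z :=
      hF.congr_of_eventuallyEq hev
    have := (hd z ⟨hz.1, hz.2.le⟩).unique h2
    rw [this]; ring
  -- h z → 0
  have hh0lim : Filter.Tendsto h (𝓝[>] (0:ℝ)) (𝓝 0) := by
    have := (hh 0 ⟨le_refl 0, zero_le_one⟩).tendsto
    rw [hh0] at this
    have hle : 𝓝[>] (0:ℝ) ≤ 𝓝[Set.Icc (0:ℝ) 1] 0 := by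
      rw [← nhdsWithin_Ioc_eq_nhdsGT (zero_lt_one (α := ℝ))]
      exact nhdsWithin_mono _ Ioc_subset_Icc_self
    exact this.mono_left hle
  constructor
  · have hmain : Filter.Tendsto (fun z => h' z * z / γ + c + h z) (𝓝[>] (0:ℝ)) (𝓝 c) := by
      have := ((hlim.div_const γ).add_const c).add hh0lim
      simpa using this
    refine hmain.congr' ?_
    filter_upwards [hIoo] with z hz
    have hz0 : (0:ℝ) < z := hz.1
    have hp : z ^ (γ - 1) ≠ 0 := (Real.rpow_pos_of_pos hz0 _).ne'
    have hq : z ^ γ = z ^ (γ - 1) * z := by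
      rw [← Real.rpow_add_one hz0.ne' (γ - 1)]; ring_nf
    rw [hderiv z hz, hq]
    field_simp
    ring
  · intro z hz
    rcases eq_or_lt_of_le hz.1 with rfl | hz0
    · rw [hh0, Real.zero_rpow hγ.ne']
      simp
    · have hq : z ^ γ ≠ 0 := (Real.rpow_pos_of_pos hz0 _).ne'
      have := heq z hz
      field_simp
      linarith [this]


theorem stmt6 (γ : ℝ) (hγ : 0 < γ) (φ φ' : ℝ → ℝ)
    (hφ : ContinuousOn φ (Set.Icc 0 1))
    (hd : ∀ z ∈ Set.Ioc (0:ℝ) 1, HasDerivAt φ (φ' z) z)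
    (hd' : ContinuousOn φ' (Set.Ioc 0 1)) :
    ((∃ c : ℝ, Filter.Tendsto (fun z => φ' z / (γ * z ^ (γ - 1)))
        (nhdsWithin 0 (Set.Ioi 0)) (nhds c)) ↔
      (∃ c : ℝ, ∃ h h' : ℝ → ℝ,
        ContinuousOn h (Set.Icc 0 1) ∧
        (∀ z ∈ Set.Ioc (0:ℝ) 1, HasDerivAt h (h' z) z) ∧
        ContinuousOn h' (Set.Ioc 0 1) ∧
        (∀ z ∈ Set.Icc (0:ℝ) 1, φ z = φ 0 + c * z ^ γ + h z * z ^ γ) ∧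
        h 0 = 0 ∧
        Filter.Tendsto (fun z => h' z * z) (nhdsWithin 0 (Set.Ioi 0)) (nhds 0))) ∧
    (∀ c : ℝ, ∀ h h' : ℝ → ℝ,
        ContinuousOn h (Set.Icc 0 1) →
        (∀ z ∈ Set.Ioc (0:ℝ) 1, HasDerivAt h (h' z) z) →
        ContinuousOn h' (Set.Ioc 0 1) →
        (∀ z ∈ Set.Icc (0:ℝ) 1, φ z = φ 0 + c * z ^ γ + h z * z ^ γ) →
        h 0 = 0 →
        Filter.Tendsto (fun z => h' z * z) (nhdsWithin 0 (Set.Ioi 0)) (nhds 0) →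
        (Filter.Tendsto (fun z => φ' z / (γ * z ^ (γ - 1)))
            (nhdsWithin 0 (Set.Ioi 0)) (nhds c) ∧
          ∀ z ∈ Set.Icc (0:ℝ) 1, h z = (φ z - φ 0 - c * z ^ γ) / z ^ γ)) := by
  constructor
  · constructor
    · rintro ⟨c, hdiv⟩
      exact ⟨c, forward_aux γ hγ φ φ' hφ hd hd' c hdiv⟩
    · rintro ⟨c, h, h', h1, h2, h3, h4, h5, h6⟩
      exact ⟨c, (backward_aux γ hγ φ φ' hφ hd c h h' h1 h2 h4 h5 h6).1⟩
  · intro c h h' h1 h2 h3 h4 h5 h6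
    exact backward_aux γ hγ φ φ' hφ hd c h h' h1 h2 h4 h5 h6
end
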